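/- arXiv:2112.04280 — 3 statements merged into one kernel-verified Lean document; each statement's English description precedes it below -/
import Mathlib

section
/- For Borel probability measures υ, μ on a Polish space M, the variational formula H(υ|μ) = sup{∫ f dυ − log ∫ e^f dμ : f measurable bounded} equals ∫ (dυ/dμ) log(dυ/dμ) dμ when υ is absolutely continuous with respect to μ, and equals +∞ otherwise. -/
open MeasureTheory
open scoped Classical

/-- The relative entropy defined via the variational formula:
`H(υ|μ) = sup { ∫ f dυ − log ∫ e^f dμ : f measurable and bounded }`, as an extended real. -/
noncomputable def relEnt {M : Type*} [MeasurableSpace M] (υ μ : Measure M) : EReal :=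
  ⨆ f : {f : M → ℝ // Measurable f ∧ ∃ C : ℝ, ∀ x, |f x| ≤ C},
    ((∫ x, f.1 x ∂υ - Real.log (∫ x, Real.exp (f.1 x) ∂μ) : ℝ) : EReal)

/-- The integral formulation of the relative entropy:
`∫ (dυ/dμ) log (dυ/dμ) dμ` if `υ ≪ μ` (and the integrand is integrable; otherwise the
integral is `+∞`), and `+∞` if `υ` is not absolutely continuous with respect to `μ`. -/

noncomputable def relEntInt {M : Type*} [MeasurableSpace M] (υ μ : Measure M) : EReal :=
  if υ ≪ μ ∧ Integrable (fun x => (υ.rnDeriv μ x).toReal * Real.log (υ.rnDeriv μ x).toReal) μ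
  then ((∫ x, (υ.rnDeriv μ x).toReal * Real.log (υ.rnDeriv μ x).toReal ∂μ : ℝ) : EReal)
  else ⊤

namespace RelEntAux

open Filter Real
open scoped Topology ENNReal

variable {M : Type*} [MeasurableSpace M] (υ μ : Measure M)

/-- The real-valued density. -/
noncomputable def g (υ μ : Measure M) (x : M) : ℝ := (υ.rnDeriv μ x).toReal

lemma g_meas : Measurable (g υ μ) := (Measure.measurable_rnDeriv υ μ).ennreal_toReal

lemma g_nonneg (x : M) : 0 ≤ g υ μ x := ENNReal.toReal_nonneg

lemma g_integrable [IsFiniteMeasure υ] : Integrable (g υ μ) μ :=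
  Measure.integrable_toReal_rnDeriv

lemma integral_g [IsProbabilityMeasure υ] [SigmaFinite μ] (hac : υ ≪ μ) :
    ∫ x, g υ μ x ∂μ = 1 := by
  show ∫ x, (υ.rnDeriv μ x).toReal ∂μ = 1
  rw [Measure.integral_toReal_rnDeriv hac]
  simp

/-- key pointwise lower bound `x log x ≥ x - 1`. -/
lemma glogg_ge (x : M) : g υ μ x - 1 ≤ g υ μ x * Real.log (g υ μ x) := by
  set t := g υ μ x with ht
  have h0 : 0 ≤ t := g_nonneg υ μ x
  rcases eq_or_lt_of_le h0 with h | h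
  · simp [← h]
  · have h1 : Real.log t⁻¹ ≤ t⁻¹ - 1 := Real.log_le_sub_one_of_pos (by positivity)
    rw [Real.log_inv] at h1
    have h2 : t * (-Real.log t) ≤ t * (t⁻¹ - 1) :=
      mul_le_mul_of_nonneg_left h1 h0
    have h3 : t * t⁻¹ = 1 := mul_inv_cancel₀ (ne_of_gt h)
    nlinarith

/-- Truncated log-density test functions. -/
noncomputable def tn (υ μ : Measure M) (n : ℕ) (x : M) : ℝ :=
  if g υ μ x = 0 then -(n : ℝ) else max (-(n : ℝ)) (min (n : ℝ) (Real.log (g υ μ x)))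

lemma tn_meas (n : ℕ) : Measurable (tn υ μ n) := by
  refine Measurable.ite (g_meas υ μ (measurableSet_singleton 0)) measurable_const ?_
  exact measurable_const.max (measurable_const.min (Real.measurable_log.comp (g_meas υ μ)))

lemma neg_le_tn (n : ℕ) (x : M) : -(n : ℝ) ≤ tn υ μ n x := by
  rw [tn]; split
  · exact le_refl _
  · exact le_max_left _ _

lemma tn_le (n : ℕ) (x : M) : tn υ μ n x ≤ (n : ℝ) := by
  have hn : -(n : ℝ) ≤ (n : ℝ) := by
    have : (0:ℝ) ≤ n := Nat.cast_nonneg n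
    linarith
  rw [tn]; split
  · exact hn
  · exact max_le hn (min_le_left _ _)

lemma abs_tn_le (n : ℕ) (x : M) : |tn υ μ n x| ≤ (n : ℝ) :=
  abs_le.2 ⟨neg_le_tn υ μ n x, tn_le υ μ n x⟩

lemma exp_tn_eq (n : ℕ) {x : M} (hx : g υ μ x ≠ 0) :
    Real.exp (tn υ μ n x) = max (Real.exp (-(n:ℝ))) (min (Real.exp n) (g υ μ x)) := by
  have hg : 0 < g υ μ x := lt_of_le_of_ne (g_nonneg υ μ x) (Ne.symm hx)
  rw [tn, if_neg hx, Real.exp_monotone.map_max, Real.exp_monotone.map_min, Real.exp_log hg]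

lemma exp_tn_le (n : ℕ) (x : M) : Real.exp (tn υ μ n x) ≤ g υ μ x + 1 := by
  have hg := g_nonneg υ μ x
  have hexp : Real.exp (-(n:ℝ)) ≤ 1 := Real.exp_le_one_iff.2 (neg_nonpos.2 (Nat.cast_nonneg n))
  by_cases hx : g υ μ x = 0
  · rw [tn, if_pos hx]; linarith
  · rw [exp_tn_eq υ μ n hx]
    exact max_le (by linarith) (le_trans (min_le_right _ _) (by linarith))

lemma exp_tn_ge (n : ℕ) (x : M) : Real.exp (-(n:ℝ)) ≤ Real.exp (tn υ μ n x) :=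
  Real.exp_le_exp.2 (neg_le_tn υ μ n x)

lemma abs_g_mul_tn_le (n : ℕ) (x : M) :
    |g υ μ x * tn υ μ n x| ≤ |g υ μ x * Real.log (g υ μ x)| := by
  set t := g υ μ x with htdef
  have h0 : 0 ≤ t := g_nonneg υ μ x
  by_cases hx : t = 0
  · simp [tn, ← htdef, hx]
  have hg : 0 < t := lt_of_le_of_ne h0 (Ne.symm hx)
  have htn : tn υ μ n x = max (-(n : ℝ)) (min (n : ℝ) (Real.log t)) := by
    rw [tn, if_neg hx]
  rcases le_or_gt 1 t with h1 | h1
  · have hlog : 0 ≤ Real.log t := Real.log_nonneg h1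
    have htn1 : 0 ≤ tn υ μ n x := by
      rw [htn]; exact le_max_of_le_right (le_min (Nat.cast_nonneg n) hlog)
    have htn2 : tn υ μ n x ≤ Real.log t := by
      rw [htn]
      exact max_le (le_trans (neg_nonpos.2 (Nat.cast_nonneg n)) hlog) (min_le_right _ _)
    rw [abs_of_nonneg (mul_nonneg h0 htn1), abs_of_nonneg (mul_nonneg h0 hlog)]
    exact mul_le_mul_of_nonneg_left htn2 h0
  · have hlog : Real.log t ≤ 0 := Real.log_nonpos h0 h1.le
    have hmin : min (n : ℝ) (Real.log t) = Real.log t :=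
      min_eq_right (le_trans hlog (Nat.cast_nonneg n))
    have htn1 : Real.log t ≤ tn υ μ n x := by rw [htn, hmin]; exact le_max_right _ _
    have htn2 : tn υ μ n x ≤ 0 := by
      rw [htn, hmin]; exact max_le (neg_nonpos.2 (Nat.cast_nonneg n)) hlog
    rw [abs_of_nonpos (mul_nonpos_of_nonneg_of_nonpos h0 htn2),
      abs_of_nonpos (mul_nonpos_of_nonneg_of_nonpos h0 hlog)]
    have := mul_le_mul_of_nonneg_left htn1 h0
    linarith

lemma tn_eventually_eq {x : M} (hx : g υ μ x ≠ 0) :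
    ∀ᶠ n : ℕ in atTop, tn υ μ n x = Real.log (g υ μ x) := by
  filter_upwards [eventually_ge_atTop ⌈|Real.log (g υ μ x)|⌉₊] with n hn
  have habs : |Real.log (g υ μ x)| ≤ (n : ℝ) :=
    le_trans (Nat.le_ceil _) (Nat.cast_le.2 hn)
  rw [abs_le] at habs
  rw [tn, if_neg hx, min_eq_right habs.2, max_eq_right habs.1]

lemma tendsto_g_mul_tn (x : M) :
    Tendsto (fun n : ℕ => g υ μ x * tn υ μ n x) atTop
      (𝓝 (g υ μ x * Real.log (g υ μ x))) := by
  by_cases hx : g υ μ x = 0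
  · simp only [hx, zero_mul]
    exact tendsto_const_nhds
  · refine Tendsto.congr' ?_ tendsto_const_nhds
    filter_upwards [tn_eventually_eq υ μ hx] with n hn
    rw [hn]

lemma tendsto_exp_tn (x : M) :
    Tendsto (fun n : ℕ => Real.exp (tn υ μ n x)) atTop (𝓝 (g υ μ x)) := by
  by_cases hx : g υ μ x = 0
  · have h1 : (fun n : ℕ => Real.exp (tn υ μ n x)) = fun n : ℕ => Real.exp (-(n:ℝ)) := by
      funext n; rw [tn, if_pos hx]
    rw [h1, hx]
    exact (Real.tendsto_exp_neg_atTop_nhds_zero).comp tendsto_natCast_atTop_atTop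
  · refine Tendsto.congr' ?_ tendsto_const_nhds
    filter_upwards [tn_eventually_eq υ μ hx] with n hn
    rw [hn, Real.exp_log (lt_of_le_of_ne (g_nonneg υ μ x) (Ne.symm hx))]

lemma integrable_g_mul_tn [IsFiniteMeasure υ] (n : ℕ) :
    Integrable (fun x => g υ μ x * tn υ μ n x) μ := by
  refine ((g_integrable υ μ).const_mul (n : ℝ)).mono'
    (((g_meas υ μ).mul (tn_meas υ μ n)).aestronglyMeasurable) (ae_of_all _ fun x => ?_)
  rw [Real.norm_eq_abs, abs_mul, abs_of_nonneg (g_nonneg υ μ x)]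
  calc g υ μ x * |tn υ μ n x| ≤ g υ μ x * n :=
        mul_le_mul_of_nonneg_left (abs_tn_le υ μ n x) (g_nonneg υ μ x)
    _ = (n : ℝ) * g υ μ x := mul_comm _ _

lemma integrable_exp_tn [IsFiniteMeasure μ] (n : ℕ) :
    Integrable (fun x => Real.exp (tn υ μ n x)) μ := by
  refine (integrable_const (Real.exp n)).mono'
    ((Real.measurable_exp.comp (tn_meas υ μ n)).aestronglyMeasurable)
    (ae_of_all _ fun x => ?_)
  rw [Real.norm_eq_abs, abs_of_nonneg (Real.exp_nonneg _)]
  exact Real.exp_le_exp.2 (tn_le υ μ n x)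

lemma integral_tn [SigmaFinite μ] [SigmaFinite υ] (hac : υ ≪ μ) (n : ℕ) :
    ∫ x, tn υ μ n x ∂υ = ∫ x, g υ μ x * tn υ μ n x ∂μ := by
  have h := integral_rnDeriv_smul (E := ℝ) hac (f := tn υ μ n)
  simp only [smul_eq_mul] at h
  rw [← h]
  rfl

lemma integral_exp_tn_pos [IsProbabilityMeasure μ] (n : ℕ) :
    0 < ∫ x, Real.exp (tn υ μ n x) ∂μ := by
  have h1 : Real.exp (-(n:ℝ)) = ∫ _x, Real.exp (-(n:ℝ)) ∂μ := by simp
  calc (0:ℝ) < Real.exp (-(n:ℝ)) := Real.exp_pos _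
    _ = ∫ _x, Real.exp (-(n:ℝ)) ∂μ := h1
    _ ≤ ∫ x, Real.exp (tn υ μ n x) ∂μ :=
        integral_mono (integrable_const _) (integrable_exp_tn υ μ n) (exp_tn_ge υ μ n)

lemma log_integral_exp_tn_le [IsProbabilityMeasure υ] [IsProbabilityMeasure μ]
    (hac : υ ≪ μ) (n : ℕ) :
    Real.log (∫ x, Real.exp (tn υ μ n x) ∂μ) ≤ 1 := by
  have h2 : ∫ x, Real.exp (tn υ μ n x) ∂μ ≤ 2 := by
    calc ∫ x, Real.exp (tn υ μ n x) ∂μ ≤ ∫ x, (g υ μ x + 1) ∂μ :=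
          integral_mono (integrable_exp_tn υ μ n)
            ((g_integrable υ μ).add (integrable_const 1)) (exp_tn_le υ μ n)
      _ = 2 := by
          rw [integral_add (g_integrable υ μ) (integrable_const 1), integral_g υ μ hac]
          simp; norm_num
  calc Real.log (∫ x, Real.exp (tn υ μ n x) ∂μ) ≤ Real.log 2 :=
        Real.log_le_log (integral_exp_tn_pos υ μ n) h2
    _ ≤ 2 - 1 := Real.log_le_sub_one_of_pos (by norm_num)
    _ = 1 := by norm_num

/-- The Gibbs inequality: upper bound for each bounded measurable `f`. -/
lemma gibbs [IsProbabilityMeasure υ] [IsProbabilityMeasure μ] (hac : υ ≪ μ)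
    (hint : Integrable (fun x => g υ μ x * Real.log (g υ μ x)) μ)
    (f : M → ℝ) (hf : Measurable f) (C : ℝ) (hC : ∀ x, |f x| ≤ C) :
    ∫ x, f x ∂υ - Real.log (∫ x, Real.exp (f x) ∂μ)
      ≤ ∫ x, g υ μ x * Real.log (g υ μ x) ∂μ := by
  set Z := ∫ x, Real.exp (f x) ∂μ with hZ
  have hfb : ∀ x, -C ≤ f x ∧ f x ≤ C := fun x => abs_le.1 (hC x)
  have hexpint : Integrable (fun x => Real.exp (f x)) μ := by
    refine (integrable_const (Real.exp C)).mono'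
      ((Real.measurable_exp.comp hf).aestronglyMeasurable) (ae_of_all _ fun x => ?_)
    rw [Real.norm_eq_abs, abs_of_nonneg (Real.exp_nonneg _)]
    exact Real.exp_le_exp.2 (hfb x).2
  have hZpos : 0 < Z := by
    have h1 : Real.exp (-C) = ∫ _x, Real.exp (-C) ∂μ := by simp
    calc (0:ℝ) < Real.exp (-C) := Real.exp_pos _
      _ = ∫ _x, Real.exp (-C) ∂μ := h1
      _ ≤ Z := integral_mono (integrable_const _) hexpint
            (fun x => Real.exp_le_exp.2 (hfb x).1)
  have hpt : ∀ x, g υ μ x * f x - g υ μ x * Real.log (g υ μ x)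
      ≤ Real.exp (f x) / Z - g υ μ x + g υ μ x * Real.log Z := by
    intro x
    by_cases hx : g υ μ x = 0
    · rw [hx]
      have : 0 ≤ Real.exp (f x) / Z := by positivity
      simpa using this
    · have hg : 0 < g υ μ x := lt_of_le_of_ne (g_nonneg υ μ x) (Ne.symm hx)
      have key := Real.add_one_le_exp (f x - Real.log Z - Real.log (g υ μ x))
      have hexp : Real.exp (f x - Real.log Z - Real.log (g υ μ x))
          = Real.exp (f x) / Z / g υ μ x := by
        rw [Real.exp_sub, Real.exp_sub, Real.exp_log hZpos, Real.exp_log hg]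
      rw [hexp] at key
      have key2 := mul_le_mul_of_nonneg_left key hg.le
      have hgg : g υ μ x * (Real.exp (f x) / Z / g υ μ x) = Real.exp (f x) / Z := by
        field_simp
      rw [hgg] at key2
      nlinarith [key2]
  have Igf : Integrable (fun x => g υ μ x * f x) μ := by
    refine ((g_integrable υ μ).const_mul C).mono'
      (((g_meas υ μ).mul hf).aestronglyMeasurable) (ae_of_all _ fun x => ?_)
    rw [Real.norm_eq_abs, abs_mul, abs_of_nonneg (g_nonneg υ μ x), mul_comm (C) _]
    exact mul_le_mul_of_nonneg_left (hC x) (g_nonneg υ μ x)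
  have IexpZ : Integrable (fun x => Real.exp (f x) / Z) μ := hexpint.div_const Z
  have IglogZ : Integrable (fun x => g υ μ x * Real.log Z) μ :=
    (g_integrable υ μ).mul_const _
  have Ig : Integrable (fun x => g υ μ x) μ := g_integrable υ μ
  have I1 : Integrable (fun x => g υ μ x * f x - g υ μ x * Real.log (g υ μ x)) μ :=
    Igf.sub hint
  have I2 : Integrable
      (fun x => Real.exp (f x) / Z - g υ μ x + g υ μ x * Real.log Z) μ :=
    (IexpZ.sub Ig).add IglogZ
  have I3 : Integrable (fun x => Real.exp (f x) / Z - g υ μ x) μ := IexpZ.sub Ig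
  have hmono := integral_mono I1 I2 hpt
  rw [integral_sub Igf hint, integral_add I3 IglogZ,
    integral_sub IexpZ Ig, integral_div, integral_g υ μ hac,
    integral_mul_const] at hmono
  have hgf : ∫ x, g υ μ x * f x ∂μ = ∫ x, f x ∂υ := by
    have h := integral_rnDeriv_smul (E := ℝ) hac (f := f)
    simp only [smul_eq_mul] at h
    rw [← h]
    rfl
  rw [hgf, integral_g υ μ hac, div_self (ne_of_gt hZpos)] at hmono
  linarith

lemma glogg_meas : Measurable (fun x => g υ μ x * Real.log (g υ μ x)) :=
  (g_meas υ μ).mul (Real.measurable_log.comp (g_meas υ μ))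

lemma abs_glogg_le (x : M) :
    |g υ μ x * Real.log (g υ μ x)| ≤ max 0 (g υ μ x * Real.log (g υ μ x)) + 1 := by
  have h1 := glogg_ge υ μ x
  have h2 := g_nonneg υ μ x
  rcases le_or_gt 0 (g υ μ x * Real.log (g υ μ x)) with h | h
  · rw [abs_of_nonneg h]
    have := le_max_right (0:ℝ) (g υ μ x * Real.log (g υ μ x))
    linarith
  · rw [abs_of_neg h]
    have := le_max_left (0:ℝ) (g υ μ x * Real.log (g υ μ x))
    linarith

lemma lintegral_pos_part_top [IsProbabilityMeasure μ]
    (hnint : ¬ Integrable (fun x => g υ μ x * Real.log (g υ μ x)) μ) :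
    ∫⁻ x, ENNReal.ofReal (max 0 (g υ μ x * Real.log (g υ μ x))) ∂μ = ⊤ := by
  by_contra h
  apply hnint
  refine ⟨(glogg_meas υ μ).aestronglyMeasurable, ?_⟩
  rw [hasFiniteIntegral_iff_norm]
  have hle : ∫⁻ x, ENNReal.ofReal ‖g υ μ x * Real.log (g υ μ x)‖ ∂μ
      ≤ ∫⁻ x, (ENNReal.ofReal (max 0 (g υ μ x * Real.log (g υ μ x))) + 1) ∂μ := by
    refine lintegral_mono fun x => ?_
    rw [Real.norm_eq_abs]
    calc ENNReal.ofReal |g υ μ x * Real.log (g υ μ x)|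
        ≤ ENNReal.ofReal (max 0 (g υ μ x * Real.log (g υ μ x)) + 1) :=
          ENNReal.ofReal_le_ofReal (abs_glogg_le υ μ x)
      _ ≤ ENNReal.ofReal (max 0 (g υ μ x * Real.log (g υ μ x))) + ENNReal.ofReal 1 :=
          ENNReal.ofReal_add_le
      _ = ENNReal.ofReal (max 0 (g υ μ x * Real.log (g υ μ x))) + 1 := by
          rw [ENNReal.ofReal_one]
    
  have hfin : ∫⁻ x, (ENNReal.ofReal (max 0 (g υ μ x * Real.log (g υ μ x))) + 1) ∂μ < ⊤ := by
    rw [lintegral_add_right _ measurable_const, lintegral_const, measure_univ, mul_one]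
    exact ENNReal.add_lt_top.2 ⟨lt_top_iff_ne_top.2 h, ENNReal.one_lt_top⟩
  exact lt_of_le_of_lt hle hfin

lemma integrable_min_trunc [IsProbabilityMeasure μ] (n : ℕ) :
    Integrable (fun x => min (n:ℝ) (max 0 (g υ μ x * Real.log (g υ μ x)))) μ := by
  refine (integrable_const (n:ℝ)).mono'
    ((measurable_const.min (measurable_const.max (glogg_meas υ μ))).aestronglyMeasurable)
    (ae_of_all _ fun x => ?_)
  rw [Real.norm_eq_abs, abs_of_nonneg (le_min (Nat.cast_nonneg n) (le_max_left _ _))]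
  exact min_le_left _ _

lemma exists_large_trunc [IsProbabilityMeasure μ]
    (hnint : ¬ Integrable (fun x => g υ μ x * Real.log (g υ μ x)) μ) (c : ℝ) :
    ∃ n : ℕ, c ≤ ∫ x, min (n:ℝ) (max 0 (g υ μ x * Real.log (g υ μ x))) ∂μ := by
  set h : M → ℝ := fun x => max 0 (g υ μ x * Real.log (g υ μ x)) with hh
  have hmeas : Measurable h := measurable_const.max (glogg_meas υ μ)
  have hnn : ∀ x, 0 ≤ h x := fun x => le_max_left 0 _
  have htop : ∫⁻ x, ENNReal.ofReal (h x) ∂μ = ⊤ := lintegral_pos_part_top υ μ hnint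
  have hsup : ∀ x, (⨆ n : ℕ, min (n : ℝ≥0∞) (ENNReal.ofReal (h x))) = ENNReal.ofReal (h x) := by
    intro x
    refine le_antisymm (iSup_le fun n => min_le_right _ _) ?_
    obtain ⟨n, hn⟩ := ENNReal.exists_nat_gt (ENNReal.ofReal_lt_top (r := h x)).ne
    refine le_trans ?_ (le_iSup (fun n : ℕ => min (n : ℝ≥0∞) (ENNReal.ofReal (h x))) n)
    rw [min_eq_right hn.le]
  have hmct : (⨆ n : ℕ, ∫⁻ x, min (n : ℝ≥0∞) (ENNReal.ofReal (h x)) ∂μ) = ⊤ := by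
    rw [← lintegral_iSup (fun n => measurable_const.min hmeas.ennreal_ofReal)
      (fun m n hmn x => min_le_min (by exact_mod_cast Nat.cast_le.2 hmn) le_rfl)]
    rw [← htop]
    refine lintegral_congr fun x => hsup x
  have hlt : ENNReal.ofReal c < ⨆ n : ℕ, ∫⁻ x, min (n : ℝ≥0∞) (ENNReal.ofReal (h x)) ∂μ := by
    rw [hmct]; exact ENNReal.ofReal_lt_top
  obtain ⟨n, hn⟩ := lt_iSup_iff.1 hlt
  refine ⟨n, ?_⟩
  have hofmin : ∀ x, ENNReal.ofReal (min (n:ℝ) (h x)) = min (n : ℝ≥0∞) (ENNReal.ofReal (h x)) := by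
    intro x
    rcases le_total (n:ℝ) (h x) with hx | hx
    · rw [min_eq_left hx, min_eq_left, ENNReal.ofReal_natCast]
      rw [← ENNReal.ofReal_natCast n]
      exact ENNReal.ofReal_le_ofReal hx
    · rw [min_eq_right hx, min_eq_right]
      rw [← ENNReal.ofReal_natCast n]
      exact ENNReal.ofReal_le_ofReal hx
  have heq : ∫ x, min (n:ℝ) (h x) ∂μ
      = (∫⁻ x, min (n : ℝ≥0∞) (ENNReal.ofReal (h x)) ∂μ).toReal := by
    rw [integral_eq_lintegral_of_nonneg_ae
      (ae_of_all _ fun x => le_min (Nat.cast_nonneg n) (hnn x))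
      ((measurable_const.min hmeas).aestronglyMeasurable)]
    congr 1
    exact lintegral_congr hofmin
  have hfin : ∫⁻ x, min (n : ℝ≥0∞) (ENNReal.ofReal (h x)) ∂μ ≠ ⊤ := by
    refine (lt_of_le_of_lt (lintegral_mono fun x => min_le_left _ _) ?_).ne
    rw [lintegral_const, measure_univ, mul_one]
    exact ENNReal.natCast_lt_top n
  rcases le_or_gt c 0 with hc | hc
  · exact le_trans hc (integral_nonneg fun x => le_min (Nat.cast_nonneg n) (hnn x))
  · rw [heq]
    have := ENNReal.toReal_mono hfin hn.le
    rwa [ENNReal.toReal_ofReal hc.le] at this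

lemma g_mul_tn_ge (n : ℕ) (x : M) :
    min (n:ℝ) (max 0 (g υ μ x * Real.log (g υ μ x))) - 1 ≤ g υ μ x * tn υ μ n x := by
  have h0 : 0 ≤ g υ μ x := g_nonneg υ μ x
  by_cases hx : g υ μ x = 0
  · rw [hx, zero_mul, zero_mul, max_self, min_eq_right (Nat.cast_nonneg n)]
    norm_num
  have hg : 0 < g υ μ x := lt_of_le_of_ne h0 (Ne.symm hx)
  have htn : tn υ μ n x = max (-(n : ℝ)) (min (n : ℝ) (Real.log (g υ μ x))) := by
    rw [tn, if_neg hx]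
  rcases le_or_gt 1 (g υ μ x) with h1 | h1
  · have hlog : 0 ≤ Real.log (g υ μ x) := Real.log_nonneg h1
    have hmax : max 0 (g υ μ x * Real.log (g υ μ x)) = g υ μ x * Real.log (g υ μ x) :=
      max_eq_right (mul_nonneg h0 hlog)
    rw [hmax]
    rcases le_total (Real.log (g υ μ x)) (n:ℝ) with h | h
    · have : tn υ μ n x = Real.log (g υ μ x) := by
        rw [htn, min_eq_right h, max_eq_right (le_trans (neg_nonpos.2 (Nat.cast_nonneg n)) hlog)]
      rw [this]
      have := min_le_right (n:ℝ) (g υ μ x * Real.log (g υ μ x))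
      linarith
    · have htnn : tn υ μ n x = (n:ℝ) := by
        rw [htn, min_eq_left h, max_eq_right (neg_le_self (Nat.cast_nonneg n))]
      rw [htnn]
      have h2 : (n:ℝ) ≤ g υ μ x * n := le_mul_of_one_le_left (Nat.cast_nonneg n) h1
      have := min_le_left (n:ℝ) (g υ μ x * Real.log (g υ μ x))
      linarith
  · have hlog : Real.log (g υ μ x) ≤ 0 := Real.log_nonpos h0 h1.le
    have hmax : max 0 (g υ μ x * Real.log (g υ μ x)) = 0 :=
      max_eq_left (mul_nonpos_of_nonneg_of_nonpos h0 hlog)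
    rw [hmax, min_eq_right (Nat.cast_nonneg n)]
    have htn1 : Real.log (g υ μ x) ≤ tn υ μ n x := by
      rw [htn, min_eq_right (le_trans hlog (Nat.cast_nonneg n))]
      exact le_max_right _ _
    have h2 := mul_le_mul_of_nonneg_left htn1 h0
    have h3 := glogg_ge υ μ x
    linarith

end RelEntAux

/-- For Borel probability measures on a Polish space, the variational formula for the
relative entropy agrees with the integral formulation. -/
theorem stmt2 {M : Type*} [MetricSpace M] [CompleteSpace M]
    [TopologicalSpace.SeparableSpace M] [MeasurableSpace M] [BorelSpace M]
    (υ μ : Measure M) [IsProbabilityMeasure υ] [IsProbabilityMeasure μ] :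
    relEnt υ μ = relEntInt υ μ := by
  classical
  open RelEntAux Filter in
  open scoped Topology in
  unfold relEnt relEntInt
  by_cases hcase : υ ≪ μ ∧
      Integrable (fun x => (υ.rnDeriv μ x).toReal * Real.log (υ.rnDeriv μ x).toReal) μ
  · rw [if_pos hcase]
    obtain ⟨hac, hint⟩ := hcase
    have hint' : Integrable (fun x => g υ μ x * Real.log (g υ μ x)) μ := hint
    apply le_antisymm
    · refine iSup_le ?_
      rintro ⟨f, hf, C, hC⟩
      exact EReal.coe_le_coe_iff.2 (gibbs υ μ hac hint' f hf C hC)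
    · set I : ℝ := ∫ x, (υ.rnDeriv μ x).toReal * Real.log (υ.rnDeriv μ x).toReal ∂μ with hI
      have hA : Tendsto (fun n : ℕ => ∫ x, g υ μ x * tn υ μ n x ∂μ) atTop (𝓝 I) := by
        refine tendsto_integral_of_dominated_convergence
          (fun x => |g υ μ x * Real.log (g υ μ x)|)
          (fun n => ((g_meas υ μ).mul (tn_meas υ μ n)).aestronglyMeasurable) hint'.abs
          (fun n => ae_of_all _ fun x => ?_) (ae_of_all _ (tendsto_g_mul_tn υ μ))
        rw [Real.norm_eq_abs]
        exact abs_g_mul_tn_le υ μ n x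
      have hB : Tendsto (fun n : ℕ => ∫ x, Real.exp (tn υ μ n x) ∂μ) atTop (𝓝 1) := by
        have h := tendsto_integral_of_dominated_convergence (fun x => g υ μ x + 1)
          (fun n => ((tn_meas υ μ n).exp).aestronglyMeasurable)
          ((g_integrable υ μ).add (integrable_const 1))
          (fun n => ae_of_all _ fun x => by
            rw [Real.norm_eq_abs, abs_of_nonneg (Real.exp_nonneg _)]
            exact exp_tn_le υ μ n x)
          (ae_of_all _ (tendsto_exp_tn υ μ))
        rwa [integral_g υ μ hac] at h
      have hlog : Tendsto (fun n : ℕ => Real.log (∫ x, Real.exp (tn υ μ n x) ∂μ))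
          atTop (𝓝 0) := by
        have hc : ContinuousAt Real.log 1 := Real.continuousAt_log one_ne_zero
        have h := hc.tendsto.comp hB
        rwa [Real.log_one] at h
      have hV : Tendsto (fun n : ℕ =>
          ∫ x, tn υ μ n x ∂υ - Real.log (∫ x, Real.exp (tn υ μ n x) ∂μ)) atTop (𝓝 I) := by
        have h := hA.sub hlog
        rw [sub_zero] at h
        refine h.congr fun n => ?_
        rw [integral_tn υ μ hac n]
      refine le_of_tendsto (EReal.tendsto_coe.2 hV) (Filter.Eventually.of_forall fun n => ?_)
      exact le_iSup (fun f : {f : M → ℝ // Measurable f ∧ ∃ C : ℝ, ∀ x, |f x| ≤ C} =>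
        ((∫ x, f.1 x ∂υ - Real.log (∫ x, Real.exp (f.1 x) ∂μ) : ℝ) : EReal))
        ⟨tn υ μ n, tn_meas υ μ n, ⟨(n:ℝ), abs_tn_le υ μ n⟩⟩
  · rw [if_neg hcase]
    rw [iSup_eq_top]
    intro b hb
    obtain ⟨c, hbc, -⟩ := EReal.exists_between_coe_real hb
    by_cases hac : υ ≪ μ
    · have hnint : ¬ Integrable (fun x => g υ μ x * Real.log (g υ μ x)) μ :=
        fun h => hcase ⟨hac, h⟩
      obtain ⟨n, hn⟩ := exists_large_trunc υ μ hnint (c + 3)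
      refine ⟨⟨tn υ μ n, tn_meas υ μ n, ⟨(n:ℝ), abs_tn_le υ μ n⟩⟩, lt_of_lt_of_le hbc ?_⟩
      rw [EReal.coe_le_coe_iff]
      have h1 : ∫ x, tn υ μ n x ∂υ = ∫ x, g υ μ x * tn υ μ n x ∂μ := integral_tn υ μ hac n
      have h2 := log_integral_exp_tn_le υ μ hac n
      have Imin := integrable_min_trunc υ μ n
      have h3 : ∫ x, (min (n:ℝ) (max 0 (g υ μ x * Real.log (g υ μ x))) - 1) ∂μ
          ≤ ∫ x, g υ μ x * tn υ μ n x ∂μ :=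
        integral_mono (Imin.sub (integrable_const 1)) (integrable_g_mul_tn υ μ n)
          (fun x => g_mul_tn_ge υ μ n x)
      rw [integral_sub Imin (integrable_const 1)] at h3
      simp only [integral_const, probReal_univ, ENNReal.toReal_one, smul_eq_mul,
        one_mul] at h3
      rw [h1]
      linarith
    · have hex : ∃ s : Set M, μ s = 0 ∧ υ s ≠ 0 := by
        by_contra hcon
        push_neg at hcon
        exact hac (Measure.AbsolutelyContinuous.mk fun s _ hs => hcon s hs)
      obtain ⟨s, hμs, hυs⟩ := hex
      set A := toMeasurable μ s with hA
      have hAm : MeasurableSet A := measurableSet_toMeasurable μ s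
      have hμA : μ A = 0 := by rw [hA, measure_toMeasurable]; exact hμs
      have hυA : υ A ≠ 0 := fun h => hυs (measure_mono_null (subset_toMeasurable μ s) h)
      set t : ℝ := (υ A).toReal with htdef
      have ht : 0 < t := ENNReal.toReal_pos hυA (measure_ne_top υ A)
      obtain ⟨n, hnc⟩ := exists_nat_gt (c / t)
      set f : M → ℝ := A.indicator fun _ => (n:ℝ) with hfdef
      have hfm : Measurable f := measurable_const.indicator hAm
      have hfb : ∀ x, |f x| ≤ (n:ℝ) := by
        intro x
        rw [hfdef, Set.indicator_apply]
        split
        · rw [abs_of_nonneg (Nat.cast_nonneg n)]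
        · rw [abs_zero]; exact Nat.cast_nonneg n
      refine ⟨⟨f, hfm, ⟨(n:ℝ), hfb⟩⟩, lt_of_lt_of_le hbc ?_⟩
      rw [EReal.coe_le_coe_iff]
      have hIf : ∫ x, f x ∂υ = t * n := by
        rw [hfdef, integral_indicator_const (n:ℝ) hAm, smul_eq_mul]
        rfl
      have hIexp : ∫ x, Real.exp (f x) ∂μ = 1 := by
        have hae : ∀ᵐ x ∂μ, x ∉ A := measure_eq_zero_iff_ae_notMem.1 hμA
        have hcongr : ∫ x, Real.exp (f x) ∂μ = ∫ _x, (1:ℝ) ∂μ := by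
          refine integral_congr_ae ?_
          filter_upwards [hae] with x hx
          rw [hfdef, Set.indicator_of_notMem hx, Real.exp_zero]
        rw [hcongr, integral_const, probReal_univ, one_smul]
      rw [hIf, hIexp, Real.log_one, sub_zero]
      rw [div_lt_iff₀ ht] at hnc
      linarith
end

section
/- Under the setting of the previous lemma (nested finite measurable partitions generating the Borel σ-algebra, all cells having positive μ-measure), the discrete relative entropies H(υ^m|μ^m) = Σ_{A ∈ A_m} υ(A) log(υ(A)/μ(A)) form a monotone increasing sequence in m, and sup_m H(υ^m|μ^m) = lim_m H(υ^m|μ^m) = H(υ|μ). -/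
open MeasureTheory Filter
open scoped Classical Topology

/-- x log x ≥ -1/e for x ≥ 0 -/
lemma aux_neg_inv_exp_le_mul_log {x : ℝ} (hx : 0 ≤ x) :
    -(Real.exp 1)⁻¹ ≤ x * Real.log x := by
  rcases eq_or_lt_of_le hx with h | h
  · simp [← h]; positivity
  · have h1 : Real.log x⁻¹ ≤ x⁻¹ / Real.exp 1 := by
      have ht := Real.log_le_sub_one_of_pos (x := x⁻¹ / Real.exp 1) (by positivity)
      have he : Real.log x⁻¹ = 1 + Real.log (x⁻¹ / Real.exp 1) := by
        rw [Real.log_div (by positivity) (Real.exp_ne_zero 1), Real.log_exp]; ring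
      linarith
    have h2 : Real.log x = - Real.log x⁻¹ := by rw [Real.log_inv]; ring
    rw [h2]
    have h3 : x * Real.log x⁻¹ ≤ x * (x⁻¹ / Real.exp 1) := by
      exact mul_le_mul_of_nonneg_left h1 hx
    have h4 : x * (x⁻¹ / Real.exp 1) = (Real.exp 1)⁻¹ := by field_simp
    nlinarith
/-- log-sum inequality -/
lemma aux_logsum {ι : Type*} (t : Finset ι) (a b : ι → ℝ)
    (ha : ∀ i ∈ t, 0 ≤ a i) (hb : ∀ i ∈ t, 0 < b i) :
    (∑ i ∈ t, a i) * Real.log ((∑ i ∈ t, a i) / (∑ i ∈ t, b i)) ≤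
      ∑ i ∈ t, a i * Real.log (a i / b i) := by
  rcases t.eq_empty_or_nonempty with rfl | hne
  · simp
  have hS : 0 < ∑ i ∈ t, b i := Finset.sum_pos hb hne
  have h := Real.convexOn_mul_log.map_sum_le (t := t)
      (w := fun i => b i / ∑ j ∈ t, b j) (p := fun i => a i / b i)
      (fun i hi => div_nonneg (hb i hi).le hS.le)
      (by rw [← Finset.sum_div]; field_simp)
      (fun i hi => Set.mem_Ici.2 (div_nonneg (ha i hi) (hb i hi).le))
  have e1 : ∑ i ∈ t, (b i / ∑ j ∈ t, b j) • (a i / b i) = (∑ i ∈ t, a i) / ∑ j ∈ t, b j := by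
    rw [Finset.sum_div]
    refine Finset.sum_congr rfl fun i hi => ?_
    have : b i ≠ 0 := (hb i hi).ne'
    field_simp
    rw [smul_eq_mul]; field_simp [hS.ne']
  rw [e1] at h
  have e2 : ∑ i ∈ t, (b i / ∑ j ∈ t, b j) • (a i / b i * Real.log (a i / b i))
      = (∑ i ∈ t, a i * Real.log (a i / b i)) / ∑ j ∈ t, b j := by
    rw [Finset.sum_div]
    refine Finset.sum_congr rfl fun i hi => ?_
    have : b i ≠ 0 := (hb i hi).ne'
    field_simp
    rw [smul_eq_mul]; field_simp [hS.ne']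
  rw [e2] at h
  calc (∑ i ∈ t, a i) * Real.log ((∑ i ∈ t, a i) / ∑ i ∈ t, b i)
      = ((∑ i ∈ t, a i) / (∑ i ∈ t, b i) * Real.log ((∑ i ∈ t, a i) / ∑ i ∈ t, b i))
        * (∑ i ∈ t, b i) := by field_simp
    _ ≤ ((∑ i ∈ t, a i * Real.log (a i / b i)) / ∑ j ∈ t, b j) * (∑ i ∈ t, b i) :=
        mul_le_mul_of_nonneg_right h hS.le
    _ = ∑ i ∈ t, a i * Real.log (a i / b i) := by field_simp

set_option linter.unusedSectionVars false

section Part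
variable {M : Type*} [MeasurableSpace M]

/-- membership in two cells forces equality -/
lemma aux_cell_unique {P : Finset (Set M)}
    (hdisj : ∀ B ∈ P, ∀ C ∈ P, B ≠ C → Disjoint B C)
    {B C : Set M} (hB : B ∈ P) (hC : C ∈ P) {x : M} (hxB : x ∈ B) (hxC : x ∈ C) : B = C := by
  by_contra h
  exact Set.disjoint_left.1 (hdisj B hB C hC h) hxB hxC

lemma aux_meas_biUnion (ρ : Measure M) {P v : Finset (Set M)} (hv : v ⊆ P)
    (hmeas : ∀ B ∈ P, MeasurableSet B)
    (hdisj : ∀ B ∈ P, ∀ C ∈ P, B ≠ C → Disjoint B C) :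
    ρ (⋃ B ∈ v, B) = ∑ B ∈ v, ρ B :=
  measure_biUnion_finset
    (fun B hB C hC hBC => hdisj B (hv hB) C (hv hC) hBC)
    (fun B hB => hmeas B (hv hB))

lemma aux_indicator_sum_eq {P : Finset (Set M)}
    (hdisj : ∀ B ∈ P, ∀ C ∈ P, B ≠ C → Disjoint B C)
    {B₀ : Set M} (hB₀ : B₀ ∈ P) {x : M} (hx : x ∈ B₀) (c : Set M → ℝ) :
    ∑ B ∈ P, B.indicator (fun _ => c B) x = c B₀ := by
  rw [Finset.sum_eq_single B₀]
  · simp [Set.indicator_of_mem hx]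
  · intro C hC hne
    exact Set.indicator_of_notMem
      (fun hxC => hne (aux_cell_unique hdisj hC hB₀ hxC hx)) _
  · exact fun h => absurd hB₀ h

lemma aux_integrable_indicator_sum (μ : Measure M) [IsFiniteMeasure μ] {P : Finset (Set M)}
    (hmeas : ∀ B ∈ P, MeasurableSet B) (c : Set M → ℝ) :
    Integrable (fun x => ∑ B ∈ P, B.indicator (fun _ => c B) x) μ := by
  apply integrable_finset_sum
  intro B hB
  exact (integrable_indicator_iff (hmeas B hB)).2
    (integrableOn_const (measure_ne_top μ B))

lemma aux_integral_indicator_sum (μ : Measure M) [IsFiniteMeasure μ] {P : Finset (Set M)}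
    (hmeas : ∀ B ∈ P, MeasurableSet B) (c : Set M → ℝ) :
    ∫ x, ∑ B ∈ P, B.indicator (fun _ => c B) x ∂μ = ∑ B ∈ P, (μ B).toReal * c B := by
  rw [integral_finset_sum _ (fun B hB => (integrable_indicator_iff (hmeas B hB)).2
    (integrableOn_const (measure_ne_top μ B)))]
  refine Finset.sum_congr rfl fun B hB => ?_
  rw [integral_indicator_const _ (hmeas B hB)]
  simp [smul_eq_mul, measureReal_def]

/-- each coarse cell is the union of the fine cells inside it -/
lemma aux_refine_cell_eq {P Q : Finset (Set M)}
    (hPdisj : ∀ B ∈ P, ∀ C ∈ P, B ≠ C → Disjoint B C)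
    (hQcover : ⋃ B ∈ Q, B = Set.univ)
    (hQnested : ∀ B ∈ Q, ∃ C ∈ P, B ⊆ C)
    {C : Set M} (hC : C ∈ P) :
    C = ⋃ B ∈ Q.filter (fun B => B ⊆ C), B := by
  ext x
  constructor
  · intro hxC
    have hx : x ∈ ⋃ B ∈ Q, B := hQcover ▸ Set.mem_univ x
    rcases Set.mem_iUnion₂.1 hx with ⟨B, hB, hxB⟩
    obtain ⟨C', hC', hBC'⟩ := hQnested B hB
    have : C' = C := aux_cell_unique hPdisj hC' hC (hBC' hxB) hxC
    exact Set.mem_iUnion₂.2 ⟨B, Finset.mem_filter.2 ⟨hB, this ▸ hBC'⟩, hxB⟩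
  · intro hx
    rcases Set.mem_iUnion₂.1 hx with ⟨B, hB, hxB⟩
    exact (Finset.mem_filter.1 hB).2 hxB

/-- decomposition of a sum over the fine partition into groups given by the coarse one -/
lemma aux_refine_sum {P Q : Finset (Set M)}
    (hPdisj : ∀ B ∈ P, ∀ C ∈ P, B ≠ C → Disjoint B C)
    (hQnested : ∀ B ∈ Q, ∃ C ∈ P, B ⊆ C)
    (hQne : ∀ B ∈ Q, B.Nonempty)
    (g : Set M → ℝ) :
    ∑ B ∈ Q, g B = ∑ C ∈ P, ∑ B ∈ Q.filter (fun B => B ⊆ C), g B := by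
  rw [← Finset.sum_biUnion]
  · congr 1
    ext B
    simp only [Finset.mem_biUnion, Finset.mem_filter]
    constructor
    · intro hB
      obtain ⟨C, hC, hBC⟩ := hQnested B hB
      exact ⟨C, hC, hB, hBC⟩
    · rintro ⟨C, _, hB, _⟩; exact hB
  · intro C hC C' hC' hne
    simp only [Function.onFun]
    refine Finset.disjoint_left.2 fun B hB hB' => ?_
    rw [Finset.mem_filter] at hB hB'
    obtain ⟨x, hx⟩ := hQne B hB.1
    exact Set.disjoint_left.1 (hPdisj C hC C' hC' hne) (hB.2 hx) (hB'.2 hx)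

/-- complement of a union of cells is the union of the other cells -/
lemma aux_compl_eq {P v : Finset (Set M)} (hv : v ⊆ P)
    (hdisj : ∀ B ∈ P, ∀ C ∈ P, B ≠ C → Disjoint B C)
    (hcover : ⋃ B ∈ P, B = Set.univ) :
    (⋃ B ∈ v, B)ᶜ = ⋃ B ∈ P \ v, B := by
  ext x
  simp only [Set.mem_compl_iff, Set.mem_iUnion, Finset.mem_sdiff, exists_prop]
  constructor
  · intro hx
    have : x ∈ ⋃ B ∈ P, B := hcover ▸ Set.mem_univ x
    rcases Set.mem_iUnion₂.1 this with ⟨B, hB, hxB⟩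
    exact ⟨B, ⟨hB, fun hBv => hx ⟨B, hBv, hxB⟩⟩, hxB⟩
  · rintro ⟨B, ⟨hBP, hBv⟩, hxB⟩ ⟨C, hCv, hxC⟩
    have : B = C := aux_cell_unique hdisj hBP (hv hCv) hxB hxC
    exact hBv (this ▸ hCv)

/-- sets measurable w.r.t. the σ-algebra generated by a finite partition are unions of cells -/
lemma aux_mem_cellalg {P : Finset (Set M)}
    (hdisj : ∀ B ∈ P, ∀ C ∈ P, B ≠ C → Disjoint B C)
    (hcover : ⋃ B ∈ P, B = Set.univ)
    {s : Set M} (hs : MeasurableSet[MeasurableSpace.generateFrom (↑P : Set (Set M))] s) :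
    ∃ v ⊆ P, s = ⋃ B ∈ v, B := by
  induction s, hs using MeasurableSpace.generateFrom_induction with
  | hC t t_mem _ =>
    exact ⟨{t}, Finset.singleton_subset_iff.2 (Finset.mem_coe.1 t_mem), by simp⟩
  | empty => exact ⟨∅, Finset.empty_subset _, by simp⟩
  | compl t _ ht =>
    obtain ⟨v, hv, rfl⟩ := ht
    exact ⟨P \ v, Finset.sdiff_subset, aux_compl_eq hv hdisj hcover⟩
  | iUnion f _ hf =>
    choose v hv hfeq using hf
    refine ⟨P.filter (fun B => ∃ n, B ∈ v n), Finset.filter_subset _ _, ?_⟩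
    ext x
    simp only [Set.mem_iUnion, Finset.mem_filter, exists_prop]
    constructor
    · rintro ⟨n, hx⟩
      rw [hfeq n] at hx
      rcases Set.mem_iUnion₂.1 hx with ⟨B, hB, hxB⟩
      exact ⟨B, ⟨hv n hB, n, hB⟩, hxB⟩
    · rintro ⟨B, ⟨_, n, hBn⟩, hxB⟩
      exact ⟨n, (hfeq n) ▸ Set.mem_iUnion₂.2 ⟨B, hBn, hxB⟩⟩

end Part

section Part2
variable {M : Type*} [MeasurableSpace M]

lemma aux_setIntegral_indicator_sum (μ : Measure M) [IsFiniteMeasure μ] {P v : Finset (Set M)}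
    (hv : v ⊆ P)
    (hmeas : ∀ B ∈ P, MeasurableSet B)
    (hdisj : ∀ B ∈ P, ∀ C ∈ P, B ≠ C → Disjoint B C)
    (c : Set M → ℝ) :
    ∫ x in ⋃ B ∈ v, B, (∑ B ∈ P, B.indicator (fun _ => c B) x) ∂μ
      = ∑ B ∈ v, (μ B).toReal * c B := by
  have hmeasU : MeasurableSet (⋃ B ∈ v, (B : Set M)) :=
    v.measurableSet_biUnion (fun B hB => hmeas B (hv hB))
  rw [← integral_indicator hmeasU]
  have heq : (⋃ B ∈ v, (B : Set M)).indicator (fun x => ∑ B ∈ P, B.indicator (fun _ => c B) x)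
      = fun x => ∑ B ∈ v, B.indicator (fun _ => c B) x := by
    funext x
    by_cases hx : x ∈ ⋃ B ∈ v, (B : Set M)
    · rw [Set.indicator_of_mem hx]
      rcases Set.mem_iUnion₂.1 hx with ⟨B₀, hB₀, hxB₀⟩
      rw [aux_indicator_sum_eq hdisj (hv hB₀) hxB₀ c,
        aux_indicator_sum_eq (fun B hB C hC h => hdisj B (hv hB) C (hv hC) h) hB₀ hxB₀ c]
    · rw [Set.indicator_of_notMem hx]
      symm
      exact Finset.sum_eq_zero fun B hB => Set.indicator_of_notMem
        (fun hxB => hx (Set.mem_iUnion₂.2 ⟨B, hB, hxB⟩)) _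
  rw [heq, aux_integral_indicator_sum μ (fun B hB => hmeas B (hv hB)) c]

/-- Jensen's inequality on a single cell. -/
lemma aux_jensen_cell {μ υ : Measure M} [IsProbabilityMeasure μ] [IsProbabilityMeasure υ]
    (hac : υ ≪ μ) {B : Set M} (hB : MeasurableSet B) (hpos : 0 < μ B)
    (hint : Integrable (fun x => (υ.rnDeriv μ x).toReal * Real.log (υ.rnDeriv μ x).toReal) μ) :
    (υ B).toReal * Real.log ((υ B).toReal / (μ B).toReal)
      ≤ ∫ x in B, (υ.rnDeriv μ x).toReal * Real.log (υ.rnDeriv μ x).toReal ∂μ := by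
  set f : M → ℝ := fun x => (υ.rnDeriv μ x).toReal with hf
  set ν := μ.restrict B with hν
  haveI : NeZero ν := ⟨by
    intro h
    have : ν Set.univ = 0 := by rw [h]; simp
    rw [hν, Measure.restrict_apply_univ] at this
    exact hpos.ne' this⟩
  have hmB : 0 < (μ B).toReal := ENNReal.toReal_pos hpos.ne' (measure_ne_top μ B)
  have h := ConvexOn.map_average_le (μ := ν) (f := f) Real.convexOn_mul_log
    Real.continuous_mul_log.continuousOn isClosed_Ici
    (Filter.Eventually.of_forall (fun x => Set.mem_Ici.2 ENNReal.toReal_nonneg))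
    (Measure.integrable_toReal_rnDeriv.restrict)
    (hint.restrict)
  have hI : ∫ x, f x ∂ν = (υ B).toReal := Measure.setIntegral_toReal_rnDeriv hac B
  have hA1 : ⨍ x, f x ∂ν = (υ B).toReal / (μ B).toReal := by
    rw [average_eq, hI, hν, measureReal_restrict_apply_univ, measureReal_def]
    rw [smul_eq_mul]; ring
  have hA2 : ⨍ x, f x * Real.log (f x) ∂ν
      = (∫ x in B, f x * Real.log (f x) ∂μ) / (μ B).toReal := by
    rw [average_eq, hν, measureReal_restrict_apply_univ, measureReal_def, smul_eq_mul]; ring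
  have h' : ((υ B).toReal / (μ B).toReal) * Real.log ((υ B).toReal / (μ B).toReal)
      ≤ (∫ x in B, f x * Real.log (f x) ∂μ) / (μ B).toReal := by
    rw [← hA1, ← hA2]; exact h
  have := mul_le_mul_of_nonneg_right h' hmB.le
  calc (υ B).toReal * Real.log ((υ B).toReal / (μ B).toReal)
      = ((υ B).toReal / (μ B).toReal) * Real.log ((υ B).toReal / (μ B).toReal) * (μ B).toReal := by
        field_simp
    _ ≤ (∫ x in B, f x * Real.log (f x) ∂μ) / (μ B).toReal * (μ B).toReal := this
    _ = ∫ x in B, f x * Real.log (f x) ∂μ := by field_simp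

end Part2
section Part3
variable {M : Type*} [MeasurableSpace M]

lemma aux_sum_toReal_cells (ρ : Measure M) [IsFiniteMeasure ρ] {P v : Finset (Set M)}
    (hv : v ⊆ P)
    (hmeas : ∀ B ∈ P, MeasurableSet B)
    (hdisj : ∀ B ∈ P, ∀ C ∈ P, B ≠ C → Disjoint B C) :
    (ρ (⋃ B ∈ v, B)).toReal = ∑ B ∈ v, (ρ B).toReal := by
  rw [aux_meas_biUnion ρ hv hmeas hdisj, ENNReal.toReal_sum (fun B _ => measure_ne_top ρ B)]

/-- monotonicity step between a partition and a refinement. -/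
lemma aux_mono_step (μ υ : Measure M) [IsProbabilityMeasure μ] [IsProbabilityMeasure υ]
    {P Q : Finset (Set M)}
    (hPdisj : ∀ B ∈ P, ∀ C ∈ P, B ≠ C → Disjoint B C)
    (hQmeas : ∀ B ∈ Q, MeasurableSet B)
    (hQdisj : ∀ B ∈ Q, ∀ C ∈ Q, B ≠ C → Disjoint B C)
    (hQcover : ⋃ B ∈ Q, B = Set.univ)
    (hQnested : ∀ B ∈ Q, ∃ C ∈ P, B ⊆ C)
    (hQposμ : ∀ B ∈ Q, 0 < μ B) :
    ∑ C ∈ P, (υ C).toReal * Real.log ((υ C).toReal / (μ C).toReal)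
      ≤ ∑ B ∈ Q, (υ B).toReal * Real.log ((υ B).toReal / (μ B).toReal) := by
  have hQne : ∀ B ∈ Q, B.Nonempty := fun B hB =>
    Set.nonempty_iff_ne_empty.2 (fun h => (hQposμ B hB).ne' (by rw [h]; simp))
  rw [aux_refine_sum hPdisj hQnested hQne]
  refine Finset.sum_le_sum fun C hC => ?_
  have hsub : Q.filter (fun B => B ⊆ C) ⊆ Q := Finset.filter_subset _ _
  have hυ : (υ C).toReal = ∑ B ∈ Q.filter (fun B => B ⊆ C), (υ B).toReal := by
    rw [← aux_sum_toReal_cells υ hsub hQmeas hQdisj,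
      ← aux_refine_cell_eq hPdisj hQcover hQnested hC]
  have hμ : (μ C).toReal = ∑ B ∈ Q.filter (fun B => B ⊆ C), (μ B).toReal := by
    rw [← aux_sum_toReal_cells μ hsub hQmeas hQdisj,
      ← aux_refine_cell_eq hPdisj hQcover hQnested hC]
  rw [hυ, hμ]
  exact aux_logsum _ _ _ (fun B _ => ENNReal.toReal_nonneg)
    (fun B hB => ENNReal.toReal_pos (hQposμ B (hsub hB)).ne' (measure_ne_top μ B))

/-- entropy sum of a partition dominates the binary divergence of any union of cells,
up to `e⁻¹`. -/
lemma aux_binary_bound (μ υ : Measure M) [IsProbabilityMeasure μ] [IsProbabilityMeasure υ]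
    {P v : Finset (Set M)} (hv : v ⊆ P)
    (hmeas : ∀ B ∈ P, MeasurableSet B)
    (hdisj : ∀ B ∈ P, ∀ C ∈ P, B ≠ C → Disjoint B C)
    (hcover : ⋃ B ∈ P, B = Set.univ)
    (hpos : ∀ B ∈ P, 0 < μ B) :
    (υ (⋃ B ∈ v, B)).toReal * Real.log ((υ (⋃ B ∈ v, B)).toReal / (μ (⋃ B ∈ v, B)).toReal)
      - (Real.exp 1)⁻¹
    ≤ ∑ B ∈ P, (υ B).toReal * Real.log ((υ B).toReal / (μ B).toReal) := by
  rw [← Finset.sum_sdiff hv]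
  have hT1 : (υ (⋃ B ∈ v, B)).toReal * Real.log
        ((υ (⋃ B ∈ v, B)).toReal / (μ (⋃ B ∈ v, B)).toReal)
      ≤ ∑ B ∈ v, (υ B).toReal * Real.log ((υ B).toReal / (μ B).toReal) := by
    rw [aux_sum_toReal_cells υ hv hmeas hdisj, aux_sum_toReal_cells μ hv hmeas hdisj]
    exact aux_logsum _ _ _ (fun B _ => ENNReal.toReal_nonneg)
      (fun B hB => ENNReal.toReal_pos (hpos B (hv hB)).ne' (measure_ne_top μ B))
  have hT2 : -(Real.exp 1)⁻¹
      ≤ ∑ B ∈ P \ v, (υ B).toReal * Real.log ((υ B).toReal / (μ B).toReal) := by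
    set a₂ := ∑ B ∈ P \ v, (υ B).toReal with ha₂def
    set b₂ := ∑ B ∈ P \ v, (μ B).toReal with hb₂def
    have hls := aux_logsum (P \ v) (fun B => (υ B).toReal) (fun B => (μ B).toReal)
      (fun B _ => ENNReal.toReal_nonneg)
      (fun B hB => ENNReal.toReal_pos (hpos B (Finset.sdiff_subset hB)).ne'
        (measure_ne_top μ B))
    rw [← ha₂def, ← hb₂def] at hls
    have ha₂ : 0 ≤ a₂ := Finset.sum_nonneg fun B _ => ENNReal.toReal_nonneg
    rcases eq_or_lt_of_le ha₂ with h0 | hapos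
    · refine le_trans ?_ hls
      rw [← h0]
      simp
      positivity
    · have hPvne : (P \ v).Nonempty := by
        by_contra h
        rw [Finset.not_nonempty_iff_eq_empty] at h
        rw [ha₂def, h] at hapos
        simp at hapos
      have hb₂pos : 0 < b₂ := Finset.sum_pos
        (fun B hB => ENNReal.toReal_pos (hpos B (Finset.sdiff_subset hB)).ne'
          (measure_ne_top μ B)) hPvne
      have hb₂le : b₂ ≤ 1 := by
        have h1 : ∑ B ∈ P, (μ B).toReal = 1 := by
          have := aux_sum_toReal_cells μ (Finset.Subset.refl P) hmeas hdisj
          rw [hcover] at this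
          simpa using this.symm
        rw [← h1]
        exact Finset.sum_le_sum_of_subset_of_nonneg Finset.sdiff_subset
          (fun B _ _ => ENNReal.toReal_nonneg)
      refine le_trans ?_ hls
      rw [Real.log_div hapos.ne' hb₂pos.ne']
      have h2 : a₂ * Real.log b₂ ≤ 0 :=
        mul_nonpos_of_nonneg_of_nonpos ha₂ (Real.log_nonpos hb₂pos.le hb₂le)
      have h3 := aux_neg_inv_exp_le_mul_log ha₂
      nlinarith
  linarith

end Part3
section Part4
variable {M : Type*} [MeasurableSpace M]

lemma aux_lift (A : ℕ → Finset (Set M))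
    (hdisj : ∀ m, ∀ B ∈ A m, ∀ C ∈ A m, B ≠ C → Disjoint B C)
    (hcover : ∀ m, ⋃ B ∈ A m, B = Set.univ)
    (hnested : ∀ m, ∀ B ∈ A (m + 1), ∃ C ∈ A m, B ⊆ C)
    {m m' : ℕ} (hmm : m ≤ m') {v : Finset (Set M)} (hv : v ⊆ A m) :
    ∃ v' ⊆ A m', (⋃ B ∈ v, (B : Set M)) = ⋃ B ∈ v', B := by
  induction m', hmm using Nat.le_induction with
  | base => exact ⟨v, hv, rfl⟩
  | succ k hk ih =>
    obtain ⟨v', hv', heq⟩ := ih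
    refine ⟨(A (k + 1)).filter (fun B => ∃ C ∈ v', B ⊆ C), Finset.filter_subset _ _, ?_⟩
    rw [heq]
    ext x
    simp only [Set.mem_iUnion, Finset.mem_filter, exists_prop]
    constructor
    · rintro ⟨C, hC, hxC⟩
      have : C = ⋃ B ∈ (A (k+1)).filter (fun B => B ⊆ C), B :=
        aux_refine_cell_eq (hdisj k) (hcover (k+1)) (hnested k) (hv' hC)
      rw [this] at hxC
      rcases Set.mem_iUnion₂.1 hxC with ⟨B, hB, hxB⟩
      rw [Finset.mem_filter] at hB
      exact ⟨B, ⟨hB.1, C, hC, hB.2⟩, hxB⟩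
    · rintro ⟨B, ⟨_, C, hC, hBC⟩, hxB⟩
      exact ⟨C, hC, hBC hxB⟩

lemma aux_isSetAlgebra (A : ℕ → Finset (Set M))
    (hdisj : ∀ m, ∀ B ∈ A m, ∀ C ∈ A m, B ≠ C → Disjoint B C)
    (hcover : ∀ m, ⋃ B ∈ A m, B = Set.univ)
    (hnested : ∀ m, ∀ B ∈ A (m + 1), ∃ C ∈ A m, B ⊆ C) :
    MeasureTheory.IsSetAlgebra {s : Set M | ∃ m, ∃ v ⊆ A m, s = ⋃ B ∈ v, (B : Set M)} where
  empty_mem := ⟨0, ∅, Finset.empty_subset _, by simp⟩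
  compl_mem := by
    rintro s ⟨m, v, hv, rfl⟩
    exact ⟨m, A m \ v, Finset.sdiff_subset, aux_compl_eq hv (hdisj m) (hcover m)⟩
  union_mem := by
    rintro s t ⟨m1, v1, hv1, rfl⟩ ⟨m2, v2, hv2, rfl⟩
    obtain ⟨v1', hv1', h1⟩ := aux_lift A hdisj hcover hnested (le_max_left m1 m2) hv1
    obtain ⟨v2', hv2', h2⟩ := aux_lift A hdisj hcover hnested (le_max_right m1 m2) hv2
    refine ⟨max m1 m2, v1' ∪ v2', Finset.union_subset hv1' hv2', ?_⟩
    rw [h1, h2]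
    ext x
    simp only [Set.mem_union, Set.mem_iUnion, Finset.mem_union, exists_prop]
    constructor
    · rintro (⟨B, hB, hxB⟩ | ⟨B, hB, hxB⟩)
      · exact ⟨B, Or.inl hB, hxB⟩
      · exact ⟨B, Or.inr hB, hxB⟩
    · rintro ⟨B, hB | hB, hxB⟩
      · exact Or.inl ⟨B, hB, hxB⟩
      · exact Or.inr ⟨B, hB, hxB⟩

end Part4

/-- For nested finite measurable partitions generating the Borel σ-algebra, with all cells of
positive `μ`-measure, the discrete relative entropies `H(υ^m|μ^m)` increase in `m`, and
`sup_m H(υ^m|μ^m) = lim_m H(υ^m|μ^m) = H(υ|μ)`. -/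
theorem stmt9 {M : Type*} [MetricSpace M] [CompleteSpace M]
    [TopologicalSpace.SeparableSpace M] [MeasurableSpace M] [BorelSpace M]
    (μ υ : Measure M) [IsProbabilityMeasure μ] [IsProbabilityMeasure υ]
    (A : ℕ → Finset (Set M))
    (hAmeas : ∀ m, ∀ B ∈ A m, MeasurableSet B)
    (hdisj : ∀ m, ∀ B ∈ A m, ∀ C ∈ A m, B ≠ C → Disjoint B C)
    (hcover : ∀ m, ⋃ B ∈ A m, B = Set.univ)
    (hnested : ∀ m, ∀ B ∈ A (m + 1), ∃ C ∈ A m, B ⊆ C)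
    (hpos : ∀ m, ∀ B ∈ A m, 0 < μ B)
    (hgen : (⨆ m, MeasurableSpace.generateFrom ((A m : Set (Set M)))) =
      (inferInstance : MeasurableSpace M)) :
    Monotone (fun m => ∑ B ∈ A m, (υ B).toReal * Real.log ((υ B).toReal / (μ B).toReal)) ∧
    (⨆ m, ((∑ B ∈ A m, (υ B).toReal * Real.log ((υ B).toReal / (μ B).toReal) : ℝ) : EReal))
      = relEntInt υ μ ∧
    Tendsto
      (fun m => ((∑ B ∈ A m, (υ B).toReal * Real.log ((υ B).toReal / (μ B).toReal) : ℝ) : EReal))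
      atTop (𝓝 (relEntInt υ μ)) := by
  -- abbreviation for the discrete entropies
  set H : ℕ → ℝ := fun m => ∑ B ∈ A m, (υ B).toReal * Real.log ((υ B).toReal / (μ B).toReal)
    with hHdef
  -- Part 1 : monotonicity
  have hmono : Monotone H := monotone_nat_of_le_succ (fun m =>
    aux_mono_step μ υ (hdisj m) (hAmeas (m + 1)) (hdisj (m + 1)) (hcover (m + 1))
      (hnested m) (hpos (m + 1)))
  -- basic facts
  have hb_pos : ∀ m, ∀ B ∈ A m, 0 < (μ B).toReal := fun m B hB =>
    ENNReal.toReal_pos (hpos m B hB).ne' (measure_ne_top μ B)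
  have hcell : ∀ (m : ℕ) (x : M), ∃ B₀ ∈ A m, x ∈ B₀ := by
    intro m x
    have hx : x ∈ ⋃ B ∈ A m, B := (hcover m) ▸ Set.mem_univ x
    obtain ⟨B, hB, hxB⟩ := Set.mem_iUnion₂.1 hx
    exact ⟨B, hB, hxB⟩
  -- the cell-simple functions
  set c : ℕ → Set M → ℝ := fun _ B => (υ B).toReal / (μ B).toReal with hcdef
  set S : ℕ → M → ℝ := fun m x => ∑ B ∈ A m, B.indicator (fun _ => c m B) x with hSdef
  have hSnonneg : ∀ m x, 0 ≤ S m x := fun m x =>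
    Finset.sum_nonneg fun B _ => Set.indicator_nonneg
      (fun _ _ => div_nonneg ENNReal.toReal_nonneg ENNReal.toReal_nonneg) x
  have hphiS : ∀ m x, S m x * Real.log (S m x)
      = ∑ B ∈ A m, B.indicator (fun _ => c m B * Real.log (c m B)) x := by
    intro m x
    obtain ⟨B₀, hB₀, hxB₀⟩ := hcell m x
    rw [show S m x = c m B₀ from aux_indicator_sum_eq (hdisj m) hB₀ hxB₀ (c m),
      aux_indicator_sum_eq (hdisj m) hB₀ hxB₀ (fun B => c m B * Real.log (c m B))]
  have hsummand : ∀ m, ∀ B ∈ A m,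
      (μ B).toReal * (c m B * Real.log (c m B))
        = (υ B).toReal * Real.log ((υ B).toReal / (μ B).toReal) := by
    intro m B hB
    have h := (hb_pos m B hB).ne'
    rw [hcdef]
    field_simp
  have hphiS_int : ∀ m, Integrable (fun x => S m x * Real.log (S m x)) μ := by
    intro m
    exact (aux_integrable_indicator_sum μ (hAmeas m)
      (fun B => c m B * Real.log (c m B))).congr
      (Filter.Eventually.of_forall fun x => (hphiS m x).symm)
  have hHint : ∀ m, ∫ x, S m x * Real.log (S m x) ∂μ = H m := by
    intro m
    rw [integral_congr_ae (Filter.Eventually.of_forall (hphiS m)),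
      aux_integral_indicator_sum μ (hAmeas m) (fun B => c m B * Real.log (c m B))]
    exact Finset.sum_congr rfl (hsummand m)
  have hHge : ∀ m, -(Real.exp 1)⁻¹ ≤ H m := by
    intro m
    rw [← hHint m]
    have h1 : ∫ (_ : M), -(Real.exp 1)⁻¹ ∂μ = -(Real.exp 1)⁻¹ := by
      simp [integral_const, measure_univ]
    rw [← h1]
    exact integral_mono (integrable_const _) (hphiS_int m)
      (fun x => aux_neg_inv_exp_le_mul_log (hSnonneg m x))
  -- Fatou-type lower bound (valid in general)
  have hSmeas : ∀ m, Measurable (S m) := fun m =>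
    Finset.measurable_sum _ (fun B hB => measurable_const.indicator (hAmeas m B hB))
  have hlim_m : ∀ m, ∫⁻ x, ENNReal.ofReal (S m x * Real.log (S m x) + (Real.exp 1)⁻¹) ∂μ
      = ENNReal.ofReal (H m + (Real.exp 1)⁻¹) := by
    intro m
    rw [← ofReal_integral_eq_lintegral_ofReal
      (f := fun x => S m x * Real.log (S m x) + (Real.exp 1)⁻¹)
      ((hphiS_int m).add (integrable_const _))
      (Filter.Eventually.of_forall fun x => by
        have := aux_neg_inv_exp_le_mul_log (hSnonneg m x)
        show (0:ℝ) ≤ S m x * Real.log (S m x) + (Real.exp 1)⁻¹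
        linarith)]
    congr 1
    rw [integral_add (hphiS_int m) (integrable_const _), hHint m]
    simp [integral_const, measure_univ]
  -- the main dichotomy
  have hfinal : Tendsto (fun m => ((H m : ℝ) : EReal)) atTop (𝓝 (relEntInt υ μ)) := by
    by_cases hac : υ ≪ μ
    · -- martingale convergence part
      have hconvS : ∀ᵐ x ∂μ, Tendsto (fun m => S m x) atTop
          (𝓝 ((υ.rnDeriv μ x).toReal)) := by
        have hle : ∀ m, MeasurableSpace.generateFrom ((A m : Set (Set M)))
            ≤ (inferInstance : MeasurableSpace M) :=
          fun m => MeasurableSpace.generateFrom_le (fun B hB => hAmeas m B hB)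
        have hstep : ∀ m, MeasurableSpace.generateFrom ((A m : Set (Set M)))
            ≤ MeasurableSpace.generateFrom ((A (m + 1) : Set (Set M))) := by
          intro m
          refine MeasurableSpace.generateFrom_le (fun C hC => ?_)
          rw [aux_refine_cell_eq (hdisj m) (hcover (m + 1)) (hnested m) hC]
          exact Finset.measurableSet_biUnion _ (fun B hB =>
            MeasurableSpace.measurableSet_generateFrom
              (Finset.mem_coe.2 ((Finset.mem_filter.1 hB).1)))
        set ℱ : Filtration ℕ (inferInstance : MeasurableSpace M) :=
          ⟨fun m => MeasurableSpace.generateFrom ((A m : Set (Set M))),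
            monotone_nat_of_le_succ hstep, hle⟩ with hFdef
        have hf_int : Integrable (fun x => (υ.rnDeriv μ x).toReal) μ :=
          Measure.integrable_toReal_rnDeriv
        have hScond : ∀ m, S m =ᵐ[μ] μ[(fun x => (υ.rnDeriv μ x).toReal) | ℱ m] := by
          intro m
          haveI : SigmaFinite (μ.trim (ℱ.le m)) :=
            (isFiniteMeasure_trim (ℱ.le m)).toSigmaFinite
          refine ae_eq_condExp_of_forall_setIntegral_eq (ℱ.le m) hf_int ?_ ?_ ?_
          · intro s hs hμs
            exact (aux_integrable_indicator_sum μ (hAmeas m) (c m)).integrableOn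
          · intro s hs hμs
            obtain ⟨v, hv, rfl⟩ := aux_mem_cellalg (hdisj m) (hcover m) hs
            rw [aux_setIntegral_indicator_sum μ hv (hAmeas m) (hdisj m) (c m),
              Measure.setIntegral_toReal_rnDeriv hac, measureReal_def,
              aux_sum_toReal_cells υ hv (hAmeas m) (hdisj m)]
            refine Finset.sum_congr rfl fun B hB => ?_
            have h := (hb_pos m B (hv hB)).ne'
            rw [hcdef]
            field_simp
          · refine StronglyMeasurable.aestronglyMeasurable ?_
            refine Measurable.stronglyMeasurable ?_
            exact Finset.measurable_sum _ (fun B hB =>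
              measurable_const.indicator
                (MeasurableSpace.measurableSet_generateFrom (Finset.mem_coe.2 hB)))
        have hfmeas : StronglyMeasurable[⨆ m, ℱ m] (fun x => (υ.rnDeriv μ x).toReal) := by
          have h1 : StronglyMeasurable[(inferInstance : MeasurableSpace M)]
              (fun x => (υ.rnDeriv μ x).toReal) :=
            (Measure.measurable_rnDeriv υ μ).ennreal_toReal.stronglyMeasurable
          have h2 : ((⨆ m, (ℱ m : MeasurableSpace M)) : MeasurableSpace M)
              = (inferInstance : MeasurableSpace M) := hgen
          exact h1.mono (le_of_eq h2.symm)
        have hconv := hf_int.tendsto_ae_condExp hfmeas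
        filter_upwards [(ae_all_iff).2 hScond, hconv] with x h1 h2
        exact Filter.Tendsto.congr (fun m => (h1 m).symm) h2
      have hfatou : ∫⁻ x, ENNReal.ofReal
            ((υ.rnDeriv μ x).toReal * Real.log ((υ.rnDeriv μ x).toReal) + (Real.exp 1)⁻¹) ∂μ
          ≤ liminf (fun m => ENNReal.ofReal (H m + (Real.exp 1)⁻¹)) atTop := by
        have h1 := lintegral_liminf_le (μ := μ) (u := atTop)
          (f := fun m x => ENNReal.ofReal (S m x * Real.log (S m x) + (Real.exp 1)⁻¹))
          (fun m => ((Real.continuous_mul_log.measurable.comp (hSmeas m)).add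
            measurable_const).ennreal_ofReal)
        have h2 : ∫⁻ x, ENNReal.ofReal
              ((υ.rnDeriv μ x).toReal * Real.log ((υ.rnDeriv μ x).toReal) + (Real.exp 1)⁻¹) ∂μ
            = ∫⁻ x, liminf (fun m => ENNReal.ofReal
              (S m x * Real.log (S m x) + (Real.exp 1)⁻¹)) atTop ∂μ := by
          refine lintegral_congr_ae ?_
          filter_upwards [hconvS] with x hx
          have ht : Tendsto (fun m => ENNReal.ofReal (S m x * Real.log (S m x) + (Real.exp 1)⁻¹))
              atTop (𝓝 (ENNReal.ofReal
                ((υ.rnDeriv μ x).toReal * Real.log ((υ.rnDeriv μ x).toReal) + (Real.exp 1)⁻¹))) := by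
            refine (ENNReal.continuous_ofReal.tendsto _).comp ?_
            exact (((Real.continuous_mul_log.tendsto _).comp hx).add tendsto_const_nhds)
          exact ht.liminf_eq.symm
        rw [h2]
        refine le_trans h1 ?_
        exact le_of_eq (by simp only [hlim_m])
      by_cases hint : Integrable
          (fun x => (υ.rnDeriv μ x).toReal * Real.log (υ.rnDeriv μ x).toReal) μ
      · -- the integrable case
        set I : ℝ := ∫ x, (υ.rnDeriv μ x).toReal * Real.log (υ.rnDeriv μ x).toReal ∂μ
          with hIdef
        have hH_le : ∀ m, H m ≤ I := by
          intro m
          have hstep : H m ≤ ∑ B ∈ A m, ∫ x in B,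
              (υ.rnDeriv μ x).toReal * Real.log (υ.rnDeriv μ x).toReal ∂μ := by
            rw [hHdef]
            exact Finset.sum_le_sum (fun B hB =>
              aux_jensen_cell hac (hAmeas m B hB) (hpos m B hB) hint)
          refine le_trans hstep ?_
          rw [← integral_biUnion_finset (A m) (hAmeas m)
            (fun B hB C hC h => hdisj m B hB C hC h) (fun B _ => hint.integrableOn)]
          rw [hcover m, Measure.restrict_univ, hIdef]
        have hbdd : BddAbove (Set.range H) := ⟨I, by rintro _ ⟨m, rfl⟩; exact hH_le m⟩
        have htendsR : Tendsto H atTop (𝓝 (⨆ m, H m)) := tendsto_atTop_ciSup hmono hbdd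
        have hLle : (⨆ m, H m) ≤ I := ciSup_le hH_le
        have hLge0 : -(Real.exp 1)⁻¹ ≤ ⨆ m, H m := le_trans (hHge 0) (le_ciSup hbdd 0)
        have hIge : I ≤ ⨆ m, H m := by
          have h1 : Tendsto (fun m => ENNReal.ofReal (H m + (Real.exp 1)⁻¹)) atTop
              (𝓝 (ENNReal.ofReal ((⨆ m, H m) + (Real.exp 1)⁻¹))) :=
            (ENNReal.continuous_ofReal.tendsto _).comp (htendsR.add tendsto_const_nhds)
          have h2 := h1.liminf_eq
          rw [h2] at hfatou
          have h3 : ∫⁻ x, ENNReal.ofReal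
              ((υ.rnDeriv μ x).toReal * Real.log ((υ.rnDeriv μ x).toReal)
                + (Real.exp 1)⁻¹) ∂μ
              = ENNReal.ofReal (I + (Real.exp 1)⁻¹) := by
            rw [← ofReal_integral_eq_lintegral_ofReal
              (f := fun x => (υ.rnDeriv μ x).toReal * Real.log ((υ.rnDeriv μ x).toReal)
                + (Real.exp 1)⁻¹)
              (hint.add (integrable_const _))
              (Filter.Eventually.of_forall fun x => by
                have := aux_neg_inv_exp_le_mul_log (ENNReal.toReal_nonneg (a := υ.rnDeriv μ x))
                show (0:ℝ) ≤ (υ.rnDeriv μ x).toReal * Real.log ((υ.rnDeriv μ x).toReal)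
                  + (Real.exp 1)⁻¹
                linarith)]
            congr 1
            rw [integral_add hint (integrable_const _)]
            simp [integral_const, measure_univ, hIdef]
          rw [h3] at hfatou
          have h4 := (ENNReal.ofReal_le_ofReal_iff (by linarith)).1 hfatou
          linarith
        have hLI : (⨆ m, H m) = I := le_antisymm hLle hIge
        have hrel : relEntInt υ μ = ((I : ℝ) : EReal) := by
          rw [relEntInt, if_pos ⟨hac, hint⟩]
        rw [hrel]
        exact EReal.tendsto_coe.2 (hLI ▸ htendsR)
      · -- the non-integrable case : everything tends to ⊤
        have hrel : relEntInt υ μ = ⊤ := by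
          rw [relEntInt, if_neg (fun h => hint h.2)]
        rw [hrel]
        have hnn : ∀ x : M, (0:ℝ) ≤ (υ.rnDeriv μ x).toReal * Real.log ((υ.rnDeriv μ x).toReal)
            + (Real.exp 1)⁻¹ := fun x => by
          have := aux_neg_inv_exp_le_mul_log (ENNReal.toReal_nonneg (a := υ.rnDeriv μ x))
          linarith
        have htop : ∫⁻ x, ENNReal.ofReal
            ((υ.rnDeriv μ x).toReal * Real.log ((υ.rnDeriv μ x).toReal) + (Real.exp 1)⁻¹) ∂μ
            = ⊤ := by
          by_contra h
          have hmeasg : Measurable (fun x =>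
              (υ.rnDeriv μ x).toReal * Real.log ((υ.rnDeriv μ x).toReal) + (Real.exp 1)⁻¹) :=
            (Real.continuous_mul_log.measurable.comp
              (Measure.measurable_rnDeriv υ μ).ennreal_toReal).add measurable_const
          have hig : Integrable (fun x =>
              (υ.rnDeriv μ x).toReal * Real.log ((υ.rnDeriv μ x).toReal)
                + (Real.exp 1)⁻¹) μ := by
            refine ⟨hmeasg.aestronglyMeasurable, ?_⟩
            rw [hasFiniteIntegral_iff_norm]
            have heq : ∫⁻ x, ENNReal.ofReal
                ‖(υ.rnDeriv μ x).toReal * Real.log ((υ.rnDeriv μ x).toReal)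
                  + (Real.exp 1)⁻¹‖ ∂μ
                = ∫⁻ x, ENNReal.ofReal
                ((υ.rnDeriv μ x).toReal * Real.log ((υ.rnDeriv μ x).toReal)
                  + (Real.exp 1)⁻¹) ∂μ :=
              lintegral_congr fun x => by rw [Real.norm_of_nonneg (hnn x)]
            rw [heq]
            exact lt_top_iff_ne_top.2 h
          have hsub := hig.sub (integrable_const ((Real.exp 1)⁻¹))
          refine hint (hsub.congr (Filter.Eventually.of_forall fun x => ?_))
          simp
        have hliminftop : liminf (fun m => ENNReal.ofReal (H m + (Real.exp 1)⁻¹)) atTop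
            = ⊤ := eq_top_iff.2 (htop ▸ hfatou)
        have hHtop : Tendsto H atTop atTop := by
          refine tendsto_atTop_atTop_of_monotone hmono ?_
          intro b
          have hlt : (ENNReal.ofReal (b + (Real.exp 1)⁻¹))
              < liminf (fun m => ENNReal.ofReal (H m + (Real.exp 1)⁻¹)) atTop := by
            rw [hliminftop]; exact ENNReal.ofReal_lt_top
          obtain ⟨m, hm⟩ := (eventually_lt_of_lt_liminf hlt).exists
          refine ⟨m, ?_⟩
          by_contra hb
          push_neg at hb
          exact absurd hm (not_lt.2 (ENNReal.ofReal_le_ofReal (by linarith)))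
        rw [EReal.tendsto_nhds_top_iff_real]
        intro x
        filter_upwards [hHtop.eventually_gt_atTop x] with m hm
        exact EReal.coe_lt_coe_iff.2 hm
    · -- υ is not absolutely continuous w.r.t. μ : everything tends to ⊤
      have hrel : relEntInt υ μ = ⊤ := by
        rw [relEntInt, if_neg (fun h => hac h.1)]
      rw [hrel]
      have hex : ∃ s : Set M, μ s = 0 ∧ υ s ≠ 0 := by
        by_contra h
        push_neg at h
        exact hac (Measure.AbsolutelyContinuous.mk (fun s _ hs => h s hs))
      obtain ⟨s0, hμs0, hυs0⟩ := hex
      set N := toMeasurable μ s0 with hNdef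
      have hNmeas : MeasurableSet N := measurableSet_toMeasurable μ s0
      have hμN : μ N = 0 := by rw [hNdef, measure_toMeasurable]; exact hμs0
      have hυN : υ N ≠ 0 := fun h => hυs0 (measure_mono_null (subset_toMeasurable μ s0) h)
      set cN : ℝ := (υ N).toReal with hcNdef
      have hcpos : 0 < cN := ENNReal.toReal_pos hυN (measure_ne_top υ N)
      have halg := aux_isSetAlgebra A hdisj hcover hnested
      have hgenA : (inferInstance : MeasurableSpace M) = MeasurableSpace.generateFrom
          {s : Set M | ∃ m, ∃ v ⊆ A m, s = ⋃ B ∈ v, (B : Set M)} := by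
        refine le_antisymm ?_ (MeasurableSpace.generateFrom_le ?_)
        · rw [← hgen]
          refine iSup_le fun m => MeasurableSpace.generateFrom_mono (fun B hB => ?_)
          exact ⟨m, {B}, Finset.singleton_subset_iff.2 (Finset.mem_coe.1 hB), by simp⟩
        · rintro s ⟨m, v, hv, rfl⟩
          exact v.measurableSet_biUnion (fun B hB => hAmeas m B (hv hB))
      have hdense := Measure.MeasureDense.of_generateFrom_isSetAlgebra_finite
        (μ := μ + υ) halg hgenA
      have hHtop : Tendsto H atTop atTop := by
        refine tendsto_atTop_atTop_of_monotone hmono ?_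
        intro b
        set ε : ℝ := min (cN / 2) (min 1 (Real.exp (-(b + 2 * (Real.exp 1)⁻¹) * (2 / cN))))
          with hεdef
        have hεpos : 0 < ε := lt_min (by positivity) (lt_min one_pos (Real.exp_pos _))
        have hεc : ε ≤ cN / 2 := min_le_left _ _
        have hε1 : ε ≤ 1 := le_trans (min_le_right _ _) (min_le_left _ _)
        have hεe : ε ≤ Real.exp (-(b + 2 * (Real.exp 1)⁻¹) * (2 / cN)) :=
          le_trans (min_le_right _ _) (min_le_right _ _)
        obtain ⟨t, ht, hρ⟩ := hdense.approx N hNmeas (measure_ne_top _ N) ε hεpos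
        obtain ⟨m, v, hv, rfl⟩ := ht
        refine ⟨m, ?_⟩
        set t : Set M := ⋃ B ∈ v, (B : Set M) with htdef
        have hsub1 : t \ N ⊆ symmDiff N t := fun x hx => Set.mem_symmDiff.2 (Or.inr ⟨hx.1, hx.2⟩)
        have hsub2 : N \ t ⊆ symmDiff N t := fun x hx => Set.mem_symmDiff.2 (Or.inl ⟨hx.1, hx.2⟩)
        have hμρ : ∀ s : Set M, μ s ≤ (μ + υ) s := fun s => by
          rw [Measure.add_apply]; exact le_self_add
        have hυρ : ∀ s : Set M, υ s ≤ (μ + υ) s := fun s => by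
          rw [Measure.add_apply]; exact le_add_self
        have hμt : μ t ≤ ENNReal.ofReal ε := by
          have h1 : μ t ≤ μ (t \ N) + μ N := by
            refine le_trans (measure_mono (fun x hx => ?_)) (measure_union_le _ _)
            by_cases hxN : x ∈ N
            · exact Or.inr hxN
            · exact Or.inl ⟨hx, hxN⟩
          rw [hμN, add_zero] at h1
          exact le_trans h1 (le_trans (le_trans (hμρ _)
            (measure_mono hsub1)) hρ.le)
        have hυNle : υ N ≤ υ t + ENNReal.ofReal ε := by
          have h1 : υ N ≤ υ (N ∩ t) + υ (N \ t) := by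
            refine le_trans (measure_mono (fun x hx => ?_)) (measure_union_le _ _)
            by_cases hxt : x ∈ t
            · exact Or.inl ⟨hx, hxt⟩
            · exact Or.inr ⟨hx, hxt⟩
          refine le_trans h1 (add_le_add (measure_mono Set.inter_subset_right) ?_)
          exact le_trans (le_trans (hυρ _) (measure_mono hsub2)) hρ.le
        set a : ℝ := (υ t).toReal with hadef
        set bb : ℝ := (μ t).toReal with hbbdef
        have hbb_le : bb ≤ ε := ENNReal.toReal_le_of_le_ofReal hεpos.le hμt
        have hbb_nonneg : 0 ≤ bb := ENNReal.toReal_nonneg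
        have ha_ge : cN - ε ≤ a := by
          have h1 := ENNReal.toReal_mono
            (by simp [measure_ne_top] : υ t + ENNReal.ofReal ε ≠ ⊤) hυNle
          rw [ENNReal.toReal_add (measure_ne_top υ t) ENNReal.ofReal_ne_top,
            ENNReal.toReal_ofReal hεpos.le] at h1
          linarith
        have ha_pos : 0 < a := by
          have : cN / 2 ≤ cN - ε := by linarith
          linarith [hcpos]
        have hbb_pos : 0 < bb := by
          rcases v.eq_empty_or_nonempty with rfl | ⟨B, hB⟩
          · exfalso
            have hte : t = ∅ := by simp [htdef]
            have : a = 0 := by rw [hadef, hte]; simp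
            linarith
          · have h1 : 0 < μ B := hpos m B (hv hB)
            have h2 : μ B ≤ μ t := measure_mono (fun x hx => Set.mem_biUnion hB hx)
            exact ENNReal.toReal_pos (fun h0 => h1.ne' (le_antisymm
              (h0 ▸ h2) zero_le)) (measure_ne_top μ t)
        have hbin := aux_binary_bound μ υ hv (hAmeas m) (hdisj m) (hcover m) (hpos m)
        have hXlog : Real.log ε ≤ -(b + 2 * (Real.exp 1)⁻¹) * (2 / cN) := by
          have := Real.log_le_log hεpos hεe
          rwa [Real.log_exp] at this
        have h2 : Real.log bb ≤ Real.log ε := Real.log_le_log hbb_pos hbb_le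
        have h3 : Real.log ε ≤ 0 := Real.log_nonpos hεpos.le hε1
        have halog : -(Real.exp 1)⁻¹ ≤ a * Real.log a := aux_neg_inv_exp_le_mul_log ha_pos.le
        have haha : cN / 2 ≤ a := by linarith
        have hsplit : a * Real.log (a / bb) = a * Real.log a - a * Real.log bb := by
          rw [Real.log_div ha_pos.ne' hbb_pos.ne']; ring
        have h4 : a * Real.log bb ≤ a * Real.log ε := mul_le_mul_of_nonneg_left h2 ha_pos.le
        have h5 : a * Real.log ε ≤ (cN / 2) * Real.log ε :=
          mul_le_mul_of_nonpos_right haha h3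
        have h6 : (cN / 2) * Real.log ε
            ≤ (cN / 2) * (-(b + 2 * (Real.exp 1)⁻¹) * (2 / cN)) :=
          mul_le_mul_of_nonneg_left hXlog (by positivity)
        have h7 : (cN / 2) * (-(b + 2 * (Real.exp 1)⁻¹) * (2 / cN))
            = -(b + 2 * (Real.exp 1)⁻¹) := by
          field_simp
        have hfin : b ≤ a * Real.log (a / bb) - (Real.exp 1)⁻¹ := by
          rw [hsplit]
          nlinarith
        exact le_trans hfin hbin
      rw [EReal.tendsto_nhds_top_iff_real]
      intro x
      filter_upwards [hHtop.eventually_gt_atTop x] with m hm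
      exact EReal.coe_lt_coe_iff.2 hm
  refine ⟨hmono, ?_, hfinal⟩
  exact tendsto_nhds_unique
    (tendsto_atTop_iSup (fun i j hij => EReal.coe_le_coe_iff.2 (hmono hij))) hfinal
end

section
/- Let (X_n) be i.i.d. random variables on a Polish space (M,d) with law μ, and suppose K_m ⊂ M satisfies μ(K_m^c) ≤ e^{−m²−1}/m. Let π^m : M → M be a measurable map with d(x, π^m(x)) ≤ 1/m for x ∈ K_m, and set L_n = (1/n)Σ_{i≤n} δ_{X_i}, L_n^m = (1/n)Σ_{i≤n} δ_{π^m(X_i)}. Then P(d_BL(L_n, L_n^m) > 3/m) ≤ exp(−mn). -/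
open MeasureTheory
open scoped ENNReal

/-- The bounded Lipschitz distance between two measures. -/
noncomputable def dBL {M : Type*} [PseudoMetricSpace M] [MeasurableSpace M]
    (μ υ : Measure M) : ℝ :=
  sSup {r : ℝ | ∃ f : M → ℝ, LipschitzWith 1 f ∧ (∀ x, |f x| ≤ 1) ∧
    r = |∫ x, f x ∂υ - ∫ x, f x ∂μ|}

/-- Integral of a bounded Lipschitz function against a normalized sum of Dirac masses. -/
lemma integral_emp {M : Type*} [MetricSpace M] [MeasurableSpace M] [BorelSpace M]
    (n : ℕ) (a : ℕ → M) (f : M → ℝ) (hf : LipschitzWith 1 f) (hb : ∀ x, |f x| ≤ 1) :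
    ∫ x, f x ∂((n : ℝ≥0∞)⁻¹ • ∑ i ∈ Finset.range n, Measure.dirac (a i))
      = (n : ℝ)⁻¹ * ∑ i ∈ Finset.range n, f (a i) := by
  have hsm : StronglyMeasurable f := hf.continuous.stronglyMeasurable
  have hint : ∀ i ∈ Finset.range n, Integrable f (Measure.dirac (a i)) := by
    intro i _
    refine Integrable.mono' (integrable_const 1) hsm.aestronglyMeasurable ?_
    exact Filter.Eventually.of_forall fun x => by simpa [Real.norm_eq_abs] using hb x
  rw [integral_smul_measure, integral_finset_sum_measure hint]
  simp [integral_dirac' f _ hsm, ENNReal.toReal_inv]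

/-- Deterministic bound on the bounded-Lipschitz distance of the two empirical measures. -/
lemma dBL_emp_le {M : Type*} [MetricSpace M] [MeasurableSpace M] [BorelSpace M]
    (m n : ℕ) (K : Set M) (π : M → M) (hπ : ∀ x ∈ K, dist x (π x) ≤ 1 / m)
    (a : ℕ → M) :
    dBL ((n : ℝ≥0∞)⁻¹ • ∑ i ∈ Finset.range n, Measure.dirac (a i))
        ((n : ℝ≥0∞)⁻¹ • ∑ i ∈ Finset.range n, Measure.dirac (π (a i)))
      ≤ (n : ℝ)⁻¹ * ∑ i ∈ Finset.range n,
          (1 / m + 2 * Set.indicator Kᶜ (fun _ => (1 : ℝ)) (a i)) := by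
  have hB : 0 ≤ (n : ℝ)⁻¹ * ∑ i ∈ Finset.range n,
      (1 / m + 2 * Set.indicator Kᶜ (fun _ => (1 : ℝ)) (a i)) := by
    refine mul_nonneg (by positivity) (Finset.sum_nonneg fun i _ => ?_)
    have : (0:ℝ) ≤ Set.indicator Kᶜ (fun _ => (1 : ℝ)) (a i) :=
      Set.indicator_nonneg (fun _ _ => zero_le_one) _
    positivity
  refine Real.sSup_le ?_ hB
  rintro r ⟨f, hf, hb, rfl⟩
  rw [integral_emp n a f hf hb, integral_emp n (fun i => π (a i)) f hf hb,
    ← mul_sub, ← Finset.sum_sub_distrib, abs_mul, abs_of_nonneg (by positivity : (0:ℝ) ≤ (n:ℝ)⁻¹)]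
  refine mul_le_mul_of_nonneg_left ?_ (by positivity)
  refine (Finset.abs_sum_le_sum_abs _ _).trans (Finset.sum_le_sum fun i _ => ?_)
  by_cases h : a i ∈ K
  · have h1 : |f (π (a i)) - f (a i)| ≤ dist (a i) (π (a i)) := by
      rw [abs_sub_comm]
      simpa [dist_comm, Real.dist_eq] using hf.dist_le_mul (a i) (π (a i))
    have h2 : Set.indicator Kᶜ (fun _ => (1 : ℝ)) (a i) = 0 :=
      Set.indicator_of_notMem (by simpa using h) _
    rw [h2]
    calc |f (π (a i)) - f (a i)| ≤ dist (a i) (π (a i)) := h1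
      _ ≤ 1 / m := hπ _ h
      _ = 1 / m + 2 * 0 := by ring
  · have h2 : Set.indicator Kᶜ (fun _ => (1 : ℝ)) (a i) = 1 :=
      Set.indicator_of_mem (by simpa using h) _
    rw [h2]
    have : |f (π (a i)) - f (a i)| ≤ 2 := by
      calc |f (π (a i)) - f (a i)| ≤ |f (π (a i))| + |f (a i)| := abs_sub _ _
        _ ≤ 1 + 1 := add_le_add (hb _) (hb _)
        _ = 2 := by norm_num
    have hm0 : (0:ℝ) ≤ 1 / m := by positivity
    linarith

/-- For i.i.d. variables with law `μ`, a set `K_m` with `μ(K_mᶜ) ≤ e^{−m²−1}/m`, and a map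
`π^m` moving points of `K_m` by at most `1/m`, the empirical measures `L_n` and `L_n^m`
satisfy `P(d_BL(L_n, L_n^m) > 3/m) ≤ e^{−mn}`. -/
theorem stmt14 {M Ω : Type*} [MetricSpace M] [CompleteSpace M]
    [TopologicalSpace.SeparableSpace M] [MeasurableSpace M] [BorelSpace M]
    [MeasurableSpace Ω] (P : Measure Ω) [IsProbabilityMeasure P]
    (μ : Measure M) [IsProbabilityMeasure μ]
    (m n : ℕ) (hm : 0 < m) (hn : 0 < n)
    (X : ℕ → Ω → M) (hmeas : ∀ i, Measurable (X i))
    (hid : ∀ i, Measure.map (X i) P = μ)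
    (hindep : ProbabilityTheory.iIndepFun X P)
    (K : Set M) (hK : MeasurableSet K)
    (hKc : μ Kᶜ ≤ ENNReal.ofReal (Real.exp (-(m : ℝ) ^ 2 - 1) / m))
    (π : M → M) (hπmeas : Measurable π) (hπ : ∀ x ∈ K, dist x (π x) ≤ 1 / m) :
    P {ω | dBL ((n : ℝ≥0∞)⁻¹ • ∑ i ∈ Finset.range n, Measure.dirac (X i ω))
             ((n : ℝ≥0∞)⁻¹ • ∑ i ∈ Finset.range n, Measure.dirac (π (X i ω)))
           > 3 / m}
      ≤ ENNReal.ofReal (Real.exp (-(m * n : ℝ))) := by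
  have hm' : (0:ℝ) < m := by exact_mod_cast hm
  have hn' : (0:ℝ) < n := by exact_mod_cast hn
  -- the indicator variables
  set Y : ℕ → Ω → ℝ := fun i => Set.indicator (X i ⁻¹' Kᶜ) (fun _ => (1 : ℝ)) with hY
  have hYval : ∀ i ω, Y i ω = Set.indicator Kᶜ (fun _ => (1 : ℝ)) (X i ω) := by
    intro i ω
    by_cases h : X i ω ∈ Kᶜ
    · have h' : ω ∈ X i ⁻¹' Kᶜ := h
      simp only [hY, Set.indicator_of_mem h', Set.indicator_of_mem h]
    · have h' : ω ∉ X i ⁻¹' Kᶜ := h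
      simp only [hY, Set.indicator_of_notMem h', Set.indicator_of_notMem h]
  have hYmeas : ∀ i, Measurable (Y i) :=
    fun i => measurable_const.indicator ((hmeas i) hK.compl)
  have hY01 : ∀ i ω, Y i ω = 0 ∨ Y i ω = 1 := by
    intro i ω
    by_cases h : ω ∈ X i ⁻¹' Kᶜ
    · right; simp only [hY, Set.indicator_of_mem h]
    · left; simp only [hY, Set.indicator_of_notMem h]
  set S : Ω → ℝ := fun ω => ∑ i ∈ Finset.range n, Y i ω with hS
  -- event inclusion
  set t : ℝ := (m : ℝ) ^ 2 + 1 with ht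
  have ht0 : 0 ≤ t := by positivity
  have hsub : {ω | dBL ((n : ℝ≥0∞)⁻¹ • ∑ i ∈ Finset.range n, Measure.dirac (X i ω))
             ((n : ℝ≥0∞)⁻¹ • ∑ i ∈ Finset.range n, Measure.dirac (π (X i ω)))
           > 3 / m} ⊆ {ω | (n : ℝ) / m ≤ S ω} := by
    intro ω hω
    simp only [Set.mem_setOf_eq] at hω ⊢
    have hle := dBL_emp_le m n K π hπ (fun i => X i ω)
    have hsum : (n : ℝ)⁻¹ * ∑ i ∈ Finset.range n,
        (1 / m + 2 * Set.indicator Kᶜ (fun _ => (1 : ℝ)) (X i ω))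
        = 1 / m + 2 * S ω / n := by
      have hSeq : ∑ i ∈ Finset.range n, Set.indicator Kᶜ (fun _ => (1 : ℝ)) (X i ω) = S ω :=
        Finset.sum_congr rfl fun i _ => (hYval i ω).symm
      rw [Finset.sum_add_distrib, Finset.sum_const, Finset.card_range, nsmul_eq_mul,
        ← Finset.mul_sum, hSeq, mul_add,
        show (n:ℝ)⁻¹ * ((n:ℝ) * (1/m)) = 1/m from by field_simp,
        show (n:ℝ)⁻¹ * (2 * S ω) = 2 * S ω / n from by ring]
    rw [hsum] at hle
    have h3 : (3:ℝ) / m < 1 / m + 2 * S ω / n := lt_of_lt_of_le hω hle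
    have h2 : 2 / (m:ℝ) < 2 * S ω / n := by
      have h30 : (3:ℝ)/m = 1/m + 2/m := by ring
      linarith [h30 ▸ h3]
    rw [div_lt_div_iff₀ hm' hn'] at h2
    rw [div_le_iff₀ hm']
    nlinarith [h2]
  -- probability of each indicator
  have hp : ∀ i, P (X i ⁻¹' Kᶜ) = μ Kᶜ := by
    intro i
    rw [← hid i, Measure.map_apply (hmeas i) hK.compl]
  set q : ℝ := (μ Kᶜ).toReal with hq
  have hq0 : 0 ≤ q := ENNReal.toReal_nonneg
  have hqle : q ≤ Real.exp (-(m : ℝ) ^ 2 - 1) / m := by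
    rw [hq]
    refine ENNReal.toReal_le_of_le_ofReal (by positivity) hKc
  -- mgf of each indicator
  have hYint : ∀ i, Integrable (Y i) P :=
    fun i => (integrable_const (1:ℝ)).indicator ((hmeas i) hK.compl)
  have hexp_eq : ∀ i ω, Real.exp (t * Y i ω) = 1 + (Real.exp t - 1) * Y i ω := by
    intro i ω
    rcases hY01 i ω with h | h <;> rw [h] <;> simp
  have hmgf : ∀ i, ProbabilityTheory.mgf (Y i) P t = 1 + (Real.exp t - 1) * q := by
    intro i
    rw [ProbabilityTheory.mgf]
    have : (fun ω => Real.exp (t * Y i ω)) = fun ω => 1 + (Real.exp t - 1) * Y i ω := by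
      funext ω; exact hexp_eq i ω
    rw [this, integral_add (integrable_const 1) ((hYint i).const_mul _),
      integral_const, integral_const_mul]
    have hYi : ∫ ω, Y i ω ∂P = q := by
      simp only [hY]
      rw [MeasureTheory.integral_indicator_const (1 : ℝ) ((hmeas i) hK.compl), measureReal_def, hp i]
      simp [hq]
    rw [hYi]
    simp [measure_univ]
  -- independence of the indicators
  have hYindep : ProbabilityTheory.iIndepFun Y P := by
    have := hindep.comp (fun _ : ℕ => Set.indicator Kᶜ (fun _ => (1:ℝ)))
      (fun _ => measurable_const.indicator hK.compl)
    convert this using 1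
    funext i ω; exact hYval i ω
  -- integrability of exp(t * S)
  have hSmeas : Measurable S := Finset.measurable_sum _ (fun i _ => hYmeas i)
  have hSle : ∀ ω, S ω ≤ n := by
    intro ω
    calc S ω ≤ ∑ i ∈ Finset.range n, 1 := by
          refine Finset.sum_le_sum fun i _ => ?_
          rcases hY01 i ω with h | h <;> rw [h] <;> norm_num
      _ = n := by simp
  have hSint : Integrable (fun ω => Real.exp (t * S ω)) P := by
    refine Integrable.mono' (integrable_const (Real.exp (t * n)))
      ((hSmeas.const_mul t).exp.aestronglyMeasurable) ?_
    refine Filter.Eventually.of_forall fun ω => ?_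
    rw [Real.norm_eq_abs, abs_of_pos (Real.exp_pos _)]
    exact Real.exp_le_exp.2 (mul_le_mul_of_nonneg_left (hSle ω) ht0)
  -- Chernoff bound
  have hcher := ProbabilityTheory.measure_ge_le_exp_mul_mgf (μ := P) (X := S) ((n:ℝ)/m) ht0 hSint
  have hmgfS : ProbabilityTheory.mgf S P t = (1 + (Real.exp t - 1) * q) ^ n := by
    have hs : S = ∑ i ∈ Finset.range n, Y i := by
      funext ω; rw [hS]; simp
    rw [hs, hYindep.mgf_sum hYmeas]
    rw [Finset.prod_congr rfl fun i _ => hmgf i, Finset.prod_const, Finset.card_range]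
  -- numeric bound on the mgf
  have hbase : 1 + (Real.exp t - 1) * q ≤ Real.exp (1 / m) := by
    have h1 : (Real.exp t - 1) * q ≤ Real.exp t * q := by
      have : Real.exp t - 1 ≤ Real.exp t := by linarith
      exact mul_le_mul_of_nonneg_right this hq0
    have h2 : Real.exp t * q ≤ Real.exp t * (Real.exp (-(m:ℝ)^2 - 1) / m) :=
      mul_le_mul_of_nonneg_left hqle (Real.exp_pos _).le
    have h3 : Real.exp t * (Real.exp (-(m:ℝ)^2 - 1) / m) = 1 / m := by
      rw [ht, ← mul_div_assoc, ← Real.exp_add]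
      have hz : ((m:ℝ)^2 + 1) + (-(m:ℝ)^2 - 1) = 0 := by ring
      rw [hz, Real.exp_zero]
    have h4 : 1 + 1 / (m:ℝ) ≤ Real.exp (1 / m) := by
      have := Real.add_one_le_exp (1 / (m:ℝ))
      linarith
    linarith
  have hbase0 : 0 ≤ 1 + (Real.exp t - 1) * q := by
    have h1 : 0 ≤ (Real.exp t - 1) := by
      have := Real.one_le_exp ht0
      linarith
    positivity
  have hmgfS_le : ProbabilityTheory.mgf S P t ≤ Real.exp ((n:ℝ) / m) := by
    rw [hmgfS]
    calc (1 + (Real.exp t - 1) * q) ^ n ≤ (Real.exp (1 / m)) ^ n :=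
          pow_le_pow_left₀ hbase0 hbase n
      _ = Real.exp ((n:ℝ) / m) := by
          rw [← Real.exp_nat_mul]
          congr 1
          field_simp
  have hfinal : Real.exp (-t * ((n:ℝ)/m)) * Real.exp ((n:ℝ)/m) = Real.exp (-(m * n : ℝ)) := by
    rw [← Real.exp_add]
    congr 1
    rw [ht]
    field_simp
    ring
  have hbound : (P {ω | (n : ℝ) / m ≤ S ω}).toReal ≤ Real.exp (-(m * n : ℝ)) := by
    calc (P {ω | (n : ℝ) / m ≤ S ω}).toReal
        ≤ Real.exp (-t * ((n:ℝ)/m)) * ProbabilityTheory.mgf S P t := hcher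
      _ ≤ Real.exp (-t * ((n:ℝ)/m)) * Real.exp ((n:ℝ)/m) :=
          mul_le_mul_of_nonneg_left hmgfS_le (Real.exp_pos _).le
      _ = Real.exp (-(m * n : ℝ)) := hfinal
  calc P {ω | dBL ((n : ℝ≥0∞)⁻¹ • ∑ i ∈ Finset.range n, Measure.dirac (X i ω))
             ((n : ℝ≥0∞)⁻¹ • ∑ i ∈ Finset.range n, Measure.dirac (π (X i ω)))
           > 3 / m}
      ≤ P {ω | (n : ℝ) / m ≤ S ω} := measure_mono hsub
    _ = ENNReal.ofReal (P {ω | (n : ℝ) / m ≤ S ω}).toReal :=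
        (ENNReal.ofReal_toReal (measure_ne_top _ _)).symm
    _ ≤ ENNReal.ofReal (Real.exp (-(m * n : ℝ))) := ENNReal.ofReal_le_ofReal hbound
end
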